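/- arXiv:1606.06033 — 5 statements merged into one kernel-verified Lean document; each statement's English description precedes it below -/
import Mathlib

section
/- Almost sure convergence of the recursive Parzen–Rosenblatt density estimator: under assumptions (A1)–(A3), for any x ∈ ℝ, ĝ_n(x) = (1/n)∑_{k=1}^n (1/h_k)K((x−X_k)/h_k) converges almost surely to g(x) as n → ∞. -/
open MeasureTheory ProbabilityTheory Filter Real Finset
open scoped ENNReal NNReal Topology

lemma auxKint (K : ℝ → ℝ) (hKc : Continuous K) (hKpos : ∀ t, 0 ≤ K t)
    (C : ℝ) (hC : ∀ t, K t ≤ C)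
    (hKmom4 : Integrable (fun t => t ^ 4 * K t)) : Integrable K := by
  have hmaj : Integrable (fun t => Set.indicator (Set.Icc (-1:ℝ) 1) (fun _ => C) t
      + t ^ 4 * K t) := by
    refine Integrable.add ?_ hKmom4
    refine (integrableOn_const ?_ ?_).integrable_indicator measurableSet_Icc
    · exact measure_Icc_lt_top.ne
    · exact enorm_ne_top
  refine hmaj.mono' hKc.aestronglyMeasurable ?_
  filter_upwards with t
  rw [Real.norm_eq_abs, abs_of_nonneg (hKpos t)]
  by_cases ht : t ∈ Set.Icc (-1:ℝ) 1
  · rw [Set.indicator_of_mem ht]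
    have : 0 ≤ t ^ 4 * K t := mul_nonneg (by positivity) (hKpos t)
    linarith [hC t]
  · rw [Set.indicator_of_notMem ht]
    have h1 : 1 ≤ |t| := by
      simp only [Set.mem_Icc, not_and_or, not_le] at ht
      rcases ht with h | h
      · rw [abs_of_neg (by linarith)]; linarith
      · rw [abs_of_pos (by linarith)]; linarith
    have h4 : 1 ≤ t ^ 4 := by
      calc (1:ℝ) = 1 ^ 4 := by norm_num
      _ ≤ |t| ^ 4 := by gcongr
      _ = t ^ 4 := by rw [← abs_pow, abs_of_nonneg (by positivity)]
    nlinarith [hKpos t]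

lemma auxCov (K g : ℝ → ℝ) (x b : ℝ) (hb : 0 < b) :
    ∫ t, g t * ((1 / b) * K ((x - t) / b)) = ∫ u, K u * g (x - b * u) := by
  have hbne : b ≠ 0 := hb.ne'
  set G : ℝ → ℝ := fun u => K u * g (x - b * u) with hG
  have h1 : (fun t => g t * ((1 / b) * K ((x - t) / b)))
      = fun t => (1 / b) * G ((x - t) / b) := by
    funext t
    have : x - b * ((x - t) / b) = t := by field_simp; ring
    simp only [hG, this]; ring
  rw [h1]
  rw [MeasureTheory.integral_const_mul]
  have h2 : (fun t => G ((x - t) / b)) = fun t => (fun s => G (x / b + s)) (-(1 / b) * t) := by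
    funext t
    have : (x - t) / b = x / b + -(1 / b) * t := by field_simp; ring
    rw [this]
  rw [h2, MeasureTheory.Measure.integral_comp_mul_left (fun s => G (x / b + s)) (-(1/b)),
    MeasureTheory.integral_add_left_eq_self]
  have habs : |(-(1 / b))⁻¹| = b := by
    rw [abs_inv, abs_neg, abs_of_pos (by positivity)]
    simp
  rw [habs, smul_eq_mul]
  field_simp

lemma auxSummable (c : ℝ) (hc : 1 < c) (β : ℝ) (hβ : β < 0) :
    Summable (fun n : ℕ => (⌊c ^ n⌋₊ : ℝ) ^ β) := by
  have hc0 : 0 < c := by linarith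
  have h1 : ∀ n : ℕ, (1:ℝ) ≤ c ^ n := fun n => one_le_pow₀ hc.le
  have hfl : ∀ n : ℕ, c ^ n / 2 ≤ (⌊c ^ n⌋₊ : ℝ) := by
    intro n
    rcases le_or_gt 2 (c ^ n) with h | h
    · have := Nat.sub_one_lt_floor (c ^ n)
      linarith
    · have h2 : (1:ℕ) ≤ ⌊c ^ n⌋₊ := Nat.le_floor (by exact_mod_cast h1 n)
      have : (1:ℝ) ≤ (⌊c ^ n⌋₊ : ℝ) := by exact_mod_cast h2
      linarith
  have hgeo : Summable (fun n : ℕ => (c ^ β) ^ n * (2:ℝ) ^ (-β)) := by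
    refine (summable_geometric_of_lt_one (Real.rpow_nonneg hc0.le β) ?_).mul_right _
    exact Real.rpow_lt_one_of_one_lt_of_neg hc hβ
  refine Summable.of_nonneg_of_le (fun n => Real.rpow_nonneg (Nat.cast_nonneg _) β) ?_ hgeo
  intro n
  have hpos : (0:ℝ) < c ^ n / 2 := by positivity
  have hstep : (⌊c ^ n⌋₊ : ℝ) ^ β ≤ (c ^ n / 2) ^ β :=
    Real.rpow_le_rpow_of_nonpos hpos (hfl n) hβ.le
  refine hstep.trans_eq ?_
  rw [Real.div_rpow (by positivity) (by norm_num)]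
  rw [div_eq_mul_inv, ← Real.rpow_neg (by norm_num)]
  congr 1
  rw [← Real.rpow_natCast c n, ← Real.rpow_mul hc0.le, mul_comm,
    Real.rpow_mul hc0.le, Real.rpow_natCast]

lemma auxCesaro (u : ℕ → ℝ) (l : ℝ) (hu : Tendsto u atTop (𝓝 l)) :
    Tendsto (fun n : ℕ => (∑ k ∈ Finset.Icc 1 n, u k) / n) atTop (𝓝 l) := by
  have h1 : Tendsto (fun k : ℕ => u (1 + k)) atTop (𝓝 l) :=
    hu.comp (tendsto_atTop_mono (fun k => Nat.le_add_left k 1) tendsto_id)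
  have h2 := h1.cesaro
  refine h2.congr fun n => ?_
  rw [← Finset.Ico_add_one_right_eq_Icc, Finset.sum_Ico_eq_sum_range]
  simp [div_eq_inv_mul, add_comm]

lemma auxDCT (K g : ℝ → ℝ) (x : ℝ) (Kc : Continuous K) (gc : Continuous g)
    (hKpos : ∀ t, 0 ≤ K t) (Kint : Integrable K) (Cg : ℝ) (hCg : ∀ t, |g t| ≤ Cg)
    (hKint1 : ∫ t, K t = 1) (b : ℕ → ℝ) (hb : Tendsto b atTop (𝓝 0)) :
    Tendsto (fun k => ∫ u, K u * g (x - b k * u)) atTop (𝓝 (g x)) := by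
  have h0 : ∫ u, K u * g x = g x := by rw [integral_mul_const, hKint1, one_mul]
  rw [← h0]
  apply tendsto_integral_of_dominated_convergence (bound := fun u => Cg * K u)
  · intro k
    exact (Kc.mul (gc.comp (continuous_const.sub (continuous_const.mul continuous_id)))).aestronglyMeasurable
  · exact Kint.const_mul Cg
  · intro k
    filter_upwards with u
    rw [norm_mul, Real.norm_eq_abs, Real.norm_eq_abs, abs_of_nonneg (hKpos u), mul_comm Cg (K u)]
    exact mul_le_mul_of_nonneg_left (hCg _) (hKpos u)
  · filter_upwards with u
    have h' : Tendsto (fun k => x - b k * u) atTop (𝓝 x) := by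
      have := (tendsto_const_nhds (x := x)).sub (hb.mul_const u)
      simpa using this
    exact tendsto_const_nhds.mul ((gc.tendsto x).comp h')
theorem stmt_6
    {Ω : Type*} [MeasureSpace Ω] [IsProbabilityMeasure (ℙ : Measure Ω)]
    (α : ℝ) (hα0 : 0 < α) (hα1 : α < 1)
    (h : ℕ → ℝ) (hband : ∀ n : ℕ, h n = (n : ℝ) ^ (-α))
    (X : ℕ → Ω → ℝ) (g : ℝ → ℝ)
    (hXmeas : ∀ n, Measurable (X n))
    (hXindep : iIndepFun X ℙ)
    (hgpos : ∀ t, 0 < g t)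
    (hXlaw : ∀ n, Measure.map (X n) ℙ
      = volume.withDensity (fun t => ENNReal.ofReal (g t)))
    (ε : ℕ → Ω → ℝ) (Y : ℕ → Ω → ℝ) (f : ℝ → ℝ) (σ : ℝ)
    (hmodel : ∀ n ω, Y n ω = f (X n ω) + ε n ω)
    (hεmeas : ∀ n, Measurable (ε n))
    (hεindep : iIndepFun ε ℙ)
    (hεident : ∀ n, IdentDistrib (ε n) (ε 0) ℙ ℙ)
    (hεL2 : ∀ n, MemLp (ε n) 2 ℙ)
    (hεmean : ∀ n, ∫ ω, ε n ω ∂ℙ = 0)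
    (hεvar : ∀ n, ∫ ω, (ε n ω) ^ 2 ∂ℙ = σ ^ 2)
    (hXε : IndepFun (fun ω k => X k ω) (fun ω k => ε k ω) ℙ)
    (K K' : ℝ → ℝ)
    (hKpos : ∀ t, 0 ≤ K t)
    (hKsymm : ∀ t, K (-t) = K t)
    (hKbdd : ∃ C, ∀ t, K t ≤ C)
    (hKderiv : ∀ t, HasDerivAt K (K' t) t)
    (hK'bdd : ∃ C, ∀ t, |K' t| ≤ C)
    (hKint : ∫ t, K t = 1)
    (hK'int : ∫ t, K' t = 0)
    (hK'mom1 : ∫ t, t * K' t = -1)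
    (hK'mom2 : ∫ t, t ^ 2 * K' t = 0)
    (hKmom4 : Integrable (fun t => t ^ 4 * K t))
    (hK'mom4 : Integrable (fun t => t ^ 4 * |K' t|))
    (f' f'' : ℝ → ℝ)
    (hf : ∀ t, HasDerivAt f (f' t) t) (hf' : ∀ t, HasDerivAt f' (f'' t) t)
    (hfbdd : ∃ C, ∀ t, |f t| ≤ C) (hf'bdd : ∃ C, ∀ t, |f' t| ≤ C)
    (hf''bdd : ∃ C, ∀ t, |f'' t| ≤ C)
    (g' g'' : ℝ → ℝ)
    (hg : ∀ t, HasDerivAt g (g' t) t) (hg' : ∀ t, HasDerivAt g' (g'' t) t)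
    (hgbdd : ∃ C, ∀ t, |g t| ≤ C) (hg'bdd : ∃ C, ∀ t, |g' t| ≤ C)
    (hg''bdd : ∃ C, ∀ t, |g'' t| ≤ C)
    (ghat : ℕ → ℝ → Ω → ℝ)
    (hghat : ∀ n x ω, ghat n x ω
      = (1 / (n : ℝ)) * ∑ k ∈ Finset.Icc 1 n, (1 / h k) * K ((x - X k ω) / h k))
    :
    ∀ x : ℝ, ∀ᵐ ω ∂ℙ, Tendsto (fun n => ghat n x ω) atTop (𝓝 (g x)) := by
  intro x
  -- continuity of K and g
  have Kcont : Continuous K := by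
    rw [continuous_iff_continuousAt]; exact fun t => (hKderiv t).continuousAt
  have gcont : Continuous g := by
    rw [continuous_iff_continuousAt]; exact fun t => (hg t).continuousAt
  obtain ⟨CK, hCK⟩ := hKbdd
  have hCK0 : 0 ≤ CK := (hKpos 0).trans (hCK 0)
  obtain ⟨Cg, hCg⟩ := hgbdd
  have hCg0 : 0 ≤ Cg := (abs_nonneg _).trans (hCg 0)
  have hgle : ∀ t, g t ≤ Cg := fun t => le_of_abs_le (hCg t)
  have Kint : Integrable K := auxKint K Kcont hKpos CK hCK hKmom4
  -- bandwidth facts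
  have hh0 : ∀ k : ℕ, 0 ≤ h k := fun k => by rw [hband]; positivity
  have hhpos : ∀ k : ℕ, 1 ≤ k → 0 < h k := by
    intro k hk
    rw [hband]
    exact Real.rpow_pos_of_pos (by exact_mod_cast hk) _
  have hinv : ∀ k : ℕ, 1 ≤ k → 1 / h k = (k : ℝ) ^ α := by
    intro k hk
    rw [hband, Real.rpow_neg (Nat.cast_nonneg k), one_div, inv_inv]
  have hbto : Tendsto h atTop (𝓝 0) := by
    have : Tendsto (fun n : ℕ => ((n : ℝ)) ^ (-α)) atTop (𝓝 0) :=
      (tendsto_rpow_neg_atTop hα0).comp tendsto_natCast_atTop_atTop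
    exact this.congr fun n => (hband n).symm
  -- the kernel random variables
  set φ : ℕ → ℝ → ℝ := fun k t => (1 / h k) * K ((x - t) / h k) with hφ
  have φcont : ∀ k, Continuous (φ k) := by
    intro k
    exact continuous_const.mul (Kcont.comp ((continuous_const.sub continuous_id).div_const _))
  have φmeas : ∀ k, Measurable (φ k) := fun k => (φcont k).measurable
  set Z : ℕ → Ω → ℝ := fun k ω => φ k (X k ω) with hZdef
  have Zmeas : ∀ k, Measurable (Z k) := fun k => (φmeas k).comp (hXmeas k)
  have Zpos : ∀ k ω, 0 ≤ Z k ω := by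
    intro k ω
    exact mul_nonneg (by simpa using div_nonneg zero_le_one (hh0 k)) (hKpos _)
  have Zbdd : ∀ k ω, Z k ω ≤ (1 / h k) * CK := by
    intro k ω
    exact mul_le_mul_of_nonneg_left (hCK _) (by simpa using div_nonneg zero_le_one (hh0 k))
  have ZL2 : ∀ k, MemLp (Z k) 2 ℙ := by
    intro k
    refine (memLp_top_of_bound (Zmeas k).aestronglyMeasurable ((1 / h k) * CK) ?_).mono_exponent le_top
    filter_upwards with ω
    rw [Real.norm_eq_abs, abs_of_nonneg (Zpos k ω)]
    exact Zbdd k ω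
  have Zint : ∀ k, Integrable (Z k) := fun k => (ZL2 k).integrable one_le_two
  -- the means
  set μZ : ℕ → ℝ := fun k => ∫ ω, Z k ω with hμZ
  have mean_eq : ∀ k : ℕ, 1 ≤ k → μZ k = ∫ u, K u * g (x - h k * u) := by
    intro k hk
    have step1 : μZ k = ∫ t, φ k t ∂(Measure.map (X k) ℙ) :=
      (integral_map (hXmeas k).aemeasurable ((φcont k).aestronglyMeasurable)).symm
    rw [step1, hXlaw k]
    have hd : (fun t => ENNReal.ofReal (g t)) = (fun t => (((fun t => (g t).toNNReal) t : ℝ≥0) : ℝ≥0∞)) := rfl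
    have hm : Measurable (fun t : ℝ => (g t).toNNReal) :=
      (continuous_real_toNNReal.comp gcont).measurable
    rw [hd, integral_withDensity_eq_integral_smul hm (φ k)]
    have step2 : (fun t => (g t).toNNReal • φ k t) = fun t => g t * (1 / h k * K ((x - t) / h k)) := by
      funext t
      rw [NNReal.smul_def, smul_eq_mul, Real.coe_toNNReal _ (hgpos t).le]
    rw [step2, auxCov K g x (h k) (hhpos k hk)]
  have intg : ∀ b : ℝ, Integrable (fun u => K u * g (x - b * u)) := by
    intro b
    refine (Kint.const_mul Cg).mono' ?_ ?_
    · exact (Kcont.mul (gcont.comp ((continuous_const.sub (continuous_const.mul continuous_id))))).aestronglyMeasurable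
    · filter_upwards with u
      rw [Real.norm_eq_abs, abs_mul, abs_of_nonneg (hKpos u), mul_comm Cg (K u)]
      exact mul_le_mul_of_nonneg_left (hCg _) (hKpos u)
  have mean_tendsto : Tendsto μZ atTop (𝓝 (g x)) := by
    have base := auxDCT K g x Kcont gcont hKpos Kint Cg hCg hKint h hbto
    refine base.congr' ?_
    filter_upwards [eventually_ge_atTop 1] with k hk
    exact (mean_eq k hk).symm
  have mean_le : ∀ k : ℕ, 1 ≤ k → μZ k ≤ Cg := by
    intro k hk
    rw [mean_eq k hk]
    calc ∫ u, K u * g (x - h k * u) ≤ ∫ u, Cg * K u := by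
          refine integral_mono (intg _) (Kint.const_mul Cg) fun u => ?_
          rw [mul_comm Cg (K u)]
          exact mul_le_mul_of_nonneg_left (hgle _) (hKpos u)
      _ = Cg := by rw [integral_const_mul, hKint, mul_one]
  have mean_nonneg : ∀ k, 0 ≤ μZ k := fun k => integral_nonneg (Zpos k)
  -- variance bound
  have var_le : ∀ k : ℕ, 1 ≤ k → variance (Z k) ℙ ≤ CK * Cg * (k : ℝ) ^ α := by
    intro k hk
    have h1 : variance (Z k) ℙ ≤ ∫ ω, (Z k ω) ^ 2 := by
      have := variance_le_expectation_sq (μ := ℙ) (X := Z k) (Zmeas k).aestronglyMeasurable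
      simpa using this
    refine h1.trans ?_
    have h2 : ∫ ω, (Z k ω) ^ 2 ≤ ∫ ω, ((k : ℝ) ^ α * CK) * Z k ω := by
      refine integral_mono ?_ ((Zint k).const_mul _) fun ω => ?_
      · simpa using (ZL2 k).integrable_sq
      · rw [sq]
        refine mul_le_mul_of_nonneg_right ?_ (Zpos k ω)
        rw [← hinv k hk]; exact Zbdd k ω
    refine h2.trans ?_
    rw [integral_const_mul]
    calc (k:ℝ) ^ α * CK * μZ k ≤ (k:ℝ) ^ α * CK * Cg := by
          refine mul_le_mul_of_nonneg_left (mean_le k hk) ?_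
          positivity
      _ = CK * Cg * (k:ℝ) ^ α := by ring
  -- independence of the Z's
  have Zindep : iIndepFun Z ℙ := hXindep.comp φ φmeas
  -- partial sums
  set S : ℕ → Ω → ℝ := fun N => ∑ k ∈ Finset.Icc 1 N, Z k with hS
  have Sapply : ∀ N ω, S N ω = ∑ k ∈ Finset.Icc 1 N, Z k ω := by
    intro N ω; rw [hS]; simp
  set M : ℕ → ℝ := fun N => ∑ k ∈ Finset.Icc 1 N, μZ k with hM
  have Smean : ∀ N, ∫ ω, S N ω = M N := by
    intro N
    have : ∫ ω, S N ω = ∫ ω, ∑ k ∈ Finset.Icc 1 N, Z k ω := by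
      congr 1; funext ω; exact Sapply N ω
    rw [this, integral_finset_sum _ (fun k _ => Zint k)]
  have SL2 : ∀ N, MemLp (S N) 2 ℙ := fun N => memLp_finsetSum' _ (fun k _ => ZL2 k)
  have Svar : ∀ N : ℕ, variance (S N) ℙ ≤ CK * Cg * ((N:ℝ) ^ α * N) := by
    intro N
    rw [hS, IndepFun.variance_sum (fun k _ => ZL2 k)
      (fun i _ j _ hij => Zindep.indepFun hij)]
    calc ∑ k ∈ Finset.Icc 1 N, variance (Z k) ℙ
        ≤ ∑ k ∈ Finset.Icc 1 N, CK * Cg * (N:ℝ) ^ α := by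
          refine Finset.sum_le_sum fun k hk => ?_
          rw [Finset.mem_Icc] at hk
          refine (var_le k hk.1).trans ?_
          have : (k:ℝ) ^ α ≤ (N:ℝ) ^ α :=
            Real.rpow_le_rpow (Nat.cast_nonneg k) (by exact_mod_cast hk.2) hα0.le
          exact mul_le_mul_of_nonneg_left this (by positivity)
      _ = (N : ℝ) * (CK * Cg * (N:ℝ) ^ α) := by
          rw [Finset.sum_const, Nat.card_Icc]
          simp [nsmul_eq_mul]
      _ = CK * Cg * ((N:ℝ) ^ α * N) := by ring
  have Mtendsto : Tendsto (fun N => M N / N) atTop (𝓝 (g x)) :=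
    auxCesaro μZ (g x) mean_tendsto
  -- key: a.s. convergence along geometric subsequences
  have key : ∀ c : ℝ, 1 < c → ∀ᵐ ω ∂ℙ,
      Tendsto (fun n : ℕ => S ⌊c ^ n⌋₊ ω / (⌊c ^ n⌋₊ : ℝ)) atTop (𝓝 (g x)) := by
    intro c hc
    have hc0 : (0:ℝ) < c := by linarith
    set N : ℕ → ℕ := fun n => ⌊c ^ n⌋₊ with hN
    have hN1 : ∀ n, 1 ≤ N n := fun n => Nat.le_floor (by exact_mod_cast one_le_pow₀ hc.le)
    have hNpos : ∀ n, (0:ℝ) < (N n : ℝ) := fun n => by exact_mod_cast hN1 n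
    have hNtop : Tendsto N atTop atTop :=
      tendsto_nat_floor_atTop.comp (tendsto_pow_atTop_atTop_of_one_lt hc)
    have BC : ∀ p : ℕ, ∀ᵐ ω ∂ℙ, ∀ᶠ n in atTop,
        |S (N n) ω - M (N n)| < (1 / (p + 1 : ℝ)) * N n := by
      intro p
      set δ : ℝ := 1 / (p + 1 : ℝ) with hδ
      have hδ0 : 0 < δ := by rw [hδ]; positivity
      set s : ℕ → Set Ω := fun n => {ω | δ * N n ≤ |S (N n) ω - M (N n)|} with hs
      set a : ℕ → ℝ := fun n => (CK * Cg / δ ^ 2) * (N n : ℝ) ^ (α - 1) with ha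
      have hprob : ∀ n, ℙ (s n) ≤ ENNReal.ofReal (a n) := by
        intro n
        have hcpos : 0 < δ * N n := mul_pos hδ0 (hNpos n)
        have cheb := meas_ge_le_variance_div_sq (SL2 (N n)) hcpos
        rw [Smean (N n)] at cheb
        refine le_trans cheb (ENNReal.ofReal_le_ofReal ?_)
        have hvar := Svar (N n)
        have hne : ((N n : ℝ)) ≠ 0 := (hNpos n).ne'
        have e2 : CK * Cg * ((N n:ℝ) ^ α * N n) / (δ * N n) ^ 2 = a n := by
          show _ = (CK * Cg / δ ^ 2) * (N n : ℝ) ^ (α - 1)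
          rw [Real.rpow_sub (hNpos n), Real.rpow_one]
          field_simp
        calc variance (S (N n)) ℙ / (δ * N n) ^ 2
            ≤ CK * Cg * ((N n:ℝ) ^ α * N n) / (δ * N n) ^ 2 := by
              apply div_le_div_of_nonneg_right hvar (by positivity)
          _ = a n := e2
      have hsum : Summable a :=
        ((auxSummable c hc (α - 1) (by linarith)).mul_left _)
      have htsum : (∑' n, ℙ (s n)) ≠ ∞ := by
        have h1 : (∑' n, ℙ (s n)) ≤ ∑' n, ENNReal.ofReal (a n) := ENNReal.tsum_le_tsum hprob
        have h2 : (∑' n, ENNReal.ofReal (a n)) = ENNReal.ofReal (∑' n, a n) :=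
          (ENNReal.ofReal_tsum_of_nonneg (fun n => by
            show (0:ℝ) ≤ (CK * Cg / δ ^ 2) * (N n : ℝ) ^ (α - 1); positivity) hsum).symm
        exact ((h1.trans_eq h2).trans_lt ENNReal.ofReal_lt_top).ne
      filter_upwards [MeasureTheory.ae_eventually_notMem htsum] with ω hω
      filter_upwards [hω] with n hn
      rw [hs] at hn
      simpa using not_le.1 hn
    filter_upwards [ae_all_iff.2 BC] with ω hω
    have h3 : Tendsto (fun n => M (N n) / (N n : ℝ)) atTop (𝓝 (g x)) :=
      Mtendsto.comp hNtop
    have h4 : Tendsto (fun n => (S (N n) ω - M (N n)) / (N n : ℝ)) atTop (𝓝 0) := by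
      rw [NormedAddCommGroup.tendsto_nhds_zero]
      intro e he
      obtain ⟨p, hp⟩ := exists_nat_one_div_lt he
      filter_upwards [hω p] with n hn
      rw [Real.norm_eq_abs, abs_div, abs_of_pos (hNpos n)]
      calc |S (N n) ω - M (N n)| / (N n : ℝ)
          < (1 / (p + 1 : ℝ)) * N n / N n := by
            exact div_lt_div_of_pos_right hn (hNpos n)
        _ = 1 / (p + 1 : ℝ) := by
            rw [mul_div_assoc, div_self (hNpos n).ne']
            rw [mul_one]
        _ < e := hp
    have h5 := h4.add h3
    rw [zero_add] at h5
    refine h5.congr fun n => ?_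
    rw [← add_div, sub_add_cancel]
  -- assembling
  have cone : ∀ k : ℕ, 1 < 1 + (1 / (k + 1 : ℝ)) := by
    intro k
    have : (0:ℝ) < 1 / (k + 1 : ℝ) := by positivity
    linarith
  have clim : Tendsto (fun k : ℕ => 1 + (1 / (k + 1 : ℝ))) atTop (𝓝 1) := by
    have := tendsto_const_nhds (x := (1:ℝ)) (f := atTop (α := ℕ)) |>.add
      tendsto_one_div_add_atTop_nhds_zero_nat
    simpa using this
  have main : ∀ᵐ ω ∂ℙ, Tendsto (fun m : ℕ => S m ω / m) atTop (𝓝 (g x)) := by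
    filter_upwards [ae_all_iff.2 fun k : ℕ => key _ (cone k)] with ω hω
    refine tendsto_div_of_monotone_of_tendsto_div_floor_pow _ _ ?_ _ cone clim hω
    intro a b hab
    simp only []
    rw [Sapply, Sapply]
    exact Finset.sum_le_sum_of_subset_of_nonneg
      (Finset.Icc_subset_Icc le_rfl hab) (fun k _ _ => Zpos k ω)
  filter_upwards [main] with ω hω
  have heq : (fun n : ℕ => ghat n x ω) = fun n => S n ω / n := by
    funext n
    rw [hghat n x ω, Sapply n ω, one_div, inv_mul_eq_div]
  rw [heq]
  exact hω
end

section
/- Variance normalization for the kernel-derivative sum: with a_k(x) = f(X_k)·(1/h_k²)K′((x−X_k)/h_k) and A_n(x) = ∑_{k=1}^n a_k(x), under assumptions (A1)–(A2) and with (X_k) i.i.d. with density g, for every x ∈ ℝ, lim_{n→∞} Var(A_n(x))/n^{1+3α} = ξ² f²(x) g(x)/(1+3α), where ξ² = ∫(K′(y))²dy. -/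
open MeasureTheory ProbabilityTheory Filter Real Finset
open scoped ENNReal NNReal Topology
lemma my_sub1 (Ψ : ℝ → ℝ) (x h : ℝ) (hh : 0 < h) :
    ∫ t, Ψ ((x - t) / h) = h * ∫ u, Ψ u := by
  have e1 : (∫ t, Ψ ((x - t) / h)) = ∫ t, (fun s => Ψ ((x + s) / h)) (-t) := by
    simp only [sub_eq_add_neg]
  rw [e1, integral_neg_eq_self (fun s => Ψ ((x + s) / h)) volume,
    integral_add_left_eq_self (fun s => Ψ (s / h)) x,
    MeasureTheory.Measure.integral_comp_div (fun s => Ψ s) h,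
    abs_of_pos hh, smul_eq_mul]

lemma my_riemann (p : ℝ) (hp : 0 < p) :
    Tendsto (fun n : ℕ => (∑ k ∈ Finset.Icc 1 n, (k : ℝ) ^ p) / (n : ℝ) ^ (p + 1))
      atTop (𝓝 (1 / (p + 1))) := by
  have hp1 : (0:ℝ) < p + 1 := by linarith
  set F : ℕ → ℝ := fun j => (j : ℝ) ^ (p + 1) / (p + 1) with hF
  have key : ∀ a : ℕ, (∫ t in (a:ℝ)..((a+1:ℕ):ℝ), t ^ p) = F (a+1) - F a := by
    intro a
    rw [integral_rpow (Or.inl (by linarith))]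
    rw [hF]; push_cast; ring
  have hint : ∀ a b : ℝ, IntervalIntegrable (fun t : ℝ => t ^ p) volume a b :=
    fun a b => intervalIntegral.intervalIntegrable_rpow (Or.inl hp.le)
  have low : ∀ a : ℕ, F (a+1) - F a ≤ ((a:ℝ)+1) ^ p := by
    intro a
    rw [← key a]
    calc (∫ t in (a:ℝ)..((a+1:ℕ):ℝ), t ^ p)
        ≤ ∫ _ in (a:ℝ)..((a+1:ℕ):ℝ), ((a:ℝ)+1) ^ p := by
          apply intervalIntegral.integral_mono_on (by push_cast; linarith) (hint _ _)
            intervalIntegrable_const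
          intro t ht
          exact Real.rpow_le_rpow (le_trans (Nat.cast_nonneg a) ht.1)
            (by have := ht.2; push_cast at this ⊢; linarith) hp.le
      _ = ((a:ℝ)+1) ^ p := by
          rw [intervalIntegral.integral_const]; push_cast; ring_nf
  have high : ∀ a : ℕ, ((a:ℝ)+1) ^ p ≤ F (a+2) - F (a+1) := by
    intro a
    have hk := key (a+1)
    rw [show a+1+1 = a+2 from rfl] at hk
    rw [← hk]
    calc ((a:ℝ)+1) ^ p
        = ∫ _ in ((a+1:ℕ):ℝ)..((a+1+1:ℕ):ℝ), ((a:ℝ)+1) ^ p := by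
          rw [intervalIntegral.integral_const]; push_cast; ring_nf
      _ ≤ ∫ t in ((a+1:ℕ):ℝ)..((a+1+1:ℕ):ℝ), t ^ p := by
          apply intervalIntegral.integral_mono_on (by push_cast; linarith)
            intervalIntegrable_const (hint _ _)
          intro t ht
          exact Real.rpow_le_rpow (by positivity)
            (by have := ht.1; push_cast at this ⊢; linarith) hp.le
  have hsum : ∀ n : ℕ, (∑ k ∈ Finset.Icc 1 n, (k : ℝ) ^ p)
      = ∑ i ∈ Finset.range n, ((i:ℝ) + 1) ^ p := by
    intro n
    rw [show Finset.Icc 1 n = Finset.Ico 1 (n+1) by rw [Finset.Ico_add_one_right_eq_Icc],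
      Finset.sum_Ico_eq_sum_range]
    simp only [Nat.add_sub_cancel]
    apply Finset.sum_congr rfl
    intro i _; push_cast; ring_nf
  have Slow : ∀ n : ℕ, F n ≤ ∑ k ∈ Finset.Icc 1 n, (k : ℝ) ^ p := by
    intro n
    rw [hsum]
    calc F n = F n - F 0 := by
          simp [hF, Real.zero_rpow hp1.ne']
      _ = ∑ i ∈ Finset.range n, (F (i+1) - F i) := (Finset.sum_range_sub F n).symm
      _ ≤ ∑ i ∈ Finset.range n, ((i:ℝ)+1) ^ p := Finset.sum_le_sum (fun i _ => low i)
  have Shigh : ∀ n : ℕ, (∑ k ∈ Finset.Icc 1 n, (k : ℝ) ^ p) ≤ F (n+1) := by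
    intro n
    rw [hsum]
    calc (∑ i ∈ Finset.range n, ((i:ℝ)+1) ^ p)
        ≤ ∑ i ∈ Finset.range n, (F (i+2) - F (i+1)) := Finset.sum_le_sum (fun i _ => high i)
      _ = F (n+1) - F 1 := by
          have := Finset.sum_range_sub (fun i => F (i+1)) n
          simpa using this
      _ ≤ F (n+1) := by
          have : 0 ≤ F 1 := by simp only [hF]; positivity
          linarith
  apply tendsto_of_tendsto_of_tendsto_of_le_of_le' (g := fun _ : ℕ => 1/(p+1))
      (h := fun n : ℕ => (((n:ℝ)+1)/(n:ℝ)) ^ (p+1) / (p+1))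
  · exact tendsto_const_nhds
  · have h1 : Tendsto (fun n : ℕ => ((n:ℝ)+1)/(n:ℝ)) atTop (𝓝 1) := by
      have h0 : Tendsto (fun n : ℕ => 1 + 1/(n:ℝ)) atTop (𝓝 (1 + 0)) :=
        (tendsto_const_nhds).add (tendsto_one_div_atTop_nhds_zero_nat)
      rw [add_zero] at h0
      apply h0.congr'
      filter_upwards [eventually_gt_atTop 0] with n hn
      have : (n:ℝ) ≠ 0 := Nat.cast_ne_zero.2 hn.ne'
      field_simp
    have h2 : Tendsto (fun n : ℕ => (((n:ℝ)+1)/(n:ℝ)) ^ (p+1)) atTop (𝓝 1) := by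
      have := h1.rpow_const (p := p+1) (Or.inl one_ne_zero)
      simpa using this
    simpa using h2.div_const (p+1)
  · filter_upwards [eventually_gt_atTop 0] with n hn
    have hnp : (0:ℝ) < (n:ℝ) ^ (p+1) := Real.rpow_pos_of_pos (Nat.cast_pos.2 hn) _
    rw [div_le_div_iff₀ hp1 hnp]
    have hS' : (n:ℝ)^(p+1)/(p+1) ≤ ∑ k ∈ Finset.Icc 1 n, (k : ℝ) ^ p := Slow n
    have := (div_le_iff₀ hp1).mp hS'
    linarith
  · filter_upwards [eventually_gt_atTop 0] with n hn
    have hnpos : (0:ℝ) < (n:ℝ) := Nat.cast_pos.2 hn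
    have hnp : (0:ℝ) < (n:ℝ) ^ (p+1) := Real.rpow_pos_of_pos hnpos _
    rw [div_le_div_iff₀ hnp hp1]
    have e : (((n:ℝ)+1)/(n:ℝ)) ^ (p+1) = ((n:ℝ)+1)^(p+1) / (n:ℝ)^(p+1) :=
      Real.div_rpow (by positivity) hnpos.le _
    rw [e]
    have e2 : ((n:ℝ)+1)^(p+1) / (n:ℝ)^(p+1) * (n:ℝ)^(p+1) = ((n:ℝ)+1)^(p+1) :=
      div_mul_cancel₀ _ hnp.ne'
    rw [e2]
    have hS' : (∑ k ∈ Finset.Icc 1 n, (k : ℝ) ^ p) ≤ ((n:ℝ)+1)^(p+1)/(p+1) := by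
      have := Shigh n
      rw [hF] at this
      push_cast at this
      exact this
    have := (le_div_iff₀ hp1).mp hS'
    linarith

lemma my_cesaro (p : ℝ) (hp : 0 < p) (v : ℕ → ℝ) (L : ℝ)
    (hv : Tendsto v atTop (𝓝 L)) :
    Tendsto (fun n : ℕ => (∑ k ∈ Finset.Icc 1 n, (k : ℝ) ^ p * v k) / (n : ℝ) ^ (p + 1))
      atTop (𝓝 (L / (p + 1))) := by
  have hp1 : (0:ℝ) < p + 1 := by linarith
  have main : (fun n : ℕ => (∑ k ∈ Finset.Icc 1 n, (k : ℝ) ^ p * v k) / (n : ℝ) ^ (p + 1))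
      = fun n : ℕ => L * ((∑ k ∈ Finset.Icc 1 n, (k : ℝ) ^ p) / (n : ℝ) ^ (p + 1))
        + (∑ k ∈ Finset.Icc 1 n, (k : ℝ) ^ p * (v k - L)) / (n : ℝ) ^ (p + 1) := by
    funext n
    rw [mul_div_assoc' L, ← add_div]
    congr 1
    rw [Finset.mul_sum, ← Finset.sum_add_distrib]
    apply Finset.sum_congr rfl
    intro k _; ring
  rw [main]
  have t1 : Tendsto (fun n : ℕ => L * ((∑ k ∈ Finset.Icc 1 n, (k : ℝ) ^ p) / (n : ℝ) ^ (p + 1)))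
      atTop (𝓝 (L * (1/(p+1)))) := (my_riemann p hp).const_mul L
  have t2 : Tendsto (fun n : ℕ =>
      (∑ k ∈ Finset.Icc 1 n, (k : ℝ) ^ p * (v k - L)) / (n : ℝ) ^ (p + 1)) atTop (𝓝 0) := by
    have hc : Tendsto (fun m : ℕ => (m⁻¹ : ℝ) * ∑ i ∈ Finset.range m, |v i - L|) atTop (𝓝 0) := by
      have h0 : Tendsto (fun i : ℕ => |v i - L|) atTop (𝓝 0) := by
        have := (hv.sub_const L).abs
        simpa using this
      exact h0.cesaro
    have hb : Tendsto (fun n : ℕ =>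
        (((n:ℝ)+1)/(n:ℝ)) * (((n:ℝ)+1)⁻¹ * ∑ i ∈ Finset.range (n+1), |v i - L|)) atTop (𝓝 0) := by
      have h1 : Tendsto (fun n : ℕ => ((n:ℝ)+1)/(n:ℝ)) atTop (𝓝 1) := by
        have h0 : Tendsto (fun n : ℕ => 1 + 1/(n:ℝ)) atTop (𝓝 (1 + 0)) :=
          (tendsto_const_nhds).add (tendsto_one_div_atTop_nhds_zero_nat)
        rw [add_zero] at h0
        apply h0.congr'
        filter_upwards [eventually_gt_atTop 0] with n hn
        have : (n:ℝ) ≠ 0 := Nat.cast_ne_zero.2 hn.ne'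
        field_simp
      have h2 : Tendsto (fun n : ℕ => ((n:ℝ)+1)⁻¹ * ∑ i ∈ Finset.range (n+1), |v i - L|)
          atTop (𝓝 0) := by
        have h3 := hc.comp (tendsto_add_atTop_nat 1)
        refine h3.congr fun n => ?_
        simp only [Function.comp_apply]
        push_cast
        ring
      simpa using h1.mul h2
    rw [tendsto_zero_iff_norm_tendsto_zero]
    apply squeeze_zero' (Eventually.of_forall fun n => norm_nonneg _) ?_ hb
    filter_upwards [eventually_gt_atTop 0] with n hn
    have hnpos : (0:ℝ) < (n:ℝ) := Nat.cast_pos.2 hn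
    have hnp1 : (0:ℝ) < (n:ℝ) ^ (p+1) := Real.rpow_pos_of_pos hnpos _
    set SS : ℝ := ∑ i ∈ Finset.range (n+1), |v i - L| with hSS
    have hSSnn : 0 ≤ SS := Finset.sum_nonneg fun i _ => abs_nonneg _
    have step1 : |∑ k ∈ Finset.Icc 1 n, (k : ℝ) ^ p * (v k - L)| ≤ (n:ℝ)^p * SS := by
      calc |∑ k ∈ Finset.Icc 1 n, (k : ℝ) ^ p * (v k - L)|
          ≤ ∑ k ∈ Finset.Icc 1 n, |(k : ℝ) ^ p * (v k - L)| :=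
            Finset.abs_sum_le_sum_abs _ _
        _ ≤ ∑ k ∈ Finset.Icc 1 n, (n:ℝ) ^ p * |v k - L| := by
            apply Finset.sum_le_sum
            intro k hk
            rw [abs_mul, abs_of_nonneg (Real.rpow_nonneg (Nat.cast_nonneg k) p)]
            apply mul_le_mul_of_nonneg_right _ (abs_nonneg _)
            exact Real.rpow_le_rpow (Nat.cast_nonneg k)
              (Nat.cast_le.2 (Finset.mem_Icc.1 hk).2) hp.le
        _ = (n:ℝ)^p * ∑ k ∈ Finset.Icc 1 n, |v k - L| := by rw [Finset.mul_sum]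
        _ ≤ (n:ℝ)^p * SS := by
            apply mul_le_mul_of_nonneg_left _ (Real.rpow_nonneg hnpos.le p)
            apply Finset.sum_le_sum_of_subset_of_nonneg
            · intro k hk
              rw [Finset.mem_range]
              exact Nat.lt_succ_of_le (Finset.mem_Icc.1 hk).2
            · intro i _ _; exact abs_nonneg _
    have e1 : (n:ℝ)^p / (n:ℝ)^(p+1) = (n:ℝ)⁻¹ := by
      rw [← Real.rpow_sub hnpos]
      simp [Real.rpow_neg_one]
    have e2 : (((n:ℝ)+1)/(n:ℝ)) * (((n:ℝ)+1)⁻¹ * SS) = SS / (n:ℝ) := by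
      have h4 : ((n:ℝ)+1) ≠ 0 := by positivity
      field_simp
    rw [Real.norm_eq_abs, abs_div, abs_of_pos hnp1, e2]
    calc |∑ k ∈ Finset.Icc 1 n, (k : ℝ) ^ p * (v k - L)| / (n:ℝ)^(p+1)
        ≤ ((n:ℝ)^p * SS) / (n:ℝ)^(p+1) := by gcongr
      _ = SS / (n:ℝ) := by
          rw [mul_comm ((n:ℝ)^p) SS, mul_div_assoc, e1, div_eq_mul_inv]
  have tfin := t1.add t2
  rw [add_zero, mul_one_div] at tfin
  exact tfin

theorem stmt_11
    {Ω : Type*} [MeasureSpace Ω] [IsProbabilityMeasure (ℙ : Measure Ω)]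
    (α : ℝ) (hα0 : 0 < α) (hα1 : α < 1)
    (h : ℕ → ℝ) (hband : ∀ n : ℕ, h n = (n : ℝ) ^ (-α))
    (X : ℕ → Ω → ℝ) (g : ℝ → ℝ)
    (hXmeas : ∀ n, Measurable (X n))
    (hXindep : iIndepFun X ℙ)
    (hgpos : ∀ t, 0 < g t)
    (hXlaw : ∀ n, Measure.map (X n) ℙ
      = volume.withDensity (fun t => ENNReal.ofReal (g t)))
    (f : ℝ → ℝ)
    (K K' : ℝ → ℝ)
    (hKpos : ∀ t, 0 ≤ K t)
    (hKsymm : ∀ t, K (-t) = K t)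
    (hKbdd : ∃ C, ∀ t, K t ≤ C)
    (hKderiv : ∀ t, HasDerivAt K (K' t) t)
    (hK'bdd : ∃ C, ∀ t, |K' t| ≤ C)
    (hKint : ∫ t, K t = 1)
    (hK'int : ∫ t, K' t = 0)
    (hK'mom1 : ∫ t, t * K' t = -1)
    (hK'mom2 : ∫ t, t ^ 2 * K' t = 0)
    (hKmom4 : Integrable (fun t => t ^ 4 * K t))
    (hK'mom4 : Integrable (fun t => t ^ 4 * |K' t|))
    (f' f'' : ℝ → ℝ)
    (hf : ∀ t, HasDerivAt f (f' t) t) (hf' : ∀ t, HasDerivAt f' (f'' t) t)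
    (hfbdd : ∃ C, ∀ t, |f t| ≤ C) (hf'bdd : ∃ C, ∀ t, |f' t| ≤ C)
    (hf''bdd : ∃ C, ∀ t, |f'' t| ≤ C)
    (g' g'' : ℝ → ℝ)
    (hg : ∀ t, HasDerivAt g (g' t) t) (hg' : ∀ t, HasDerivAt g' (g'' t) t)
    (hgbdd : ∃ C, ∀ t, |g t| ≤ C) (hg'bdd : ∃ C, ∀ t, |g' t| ≤ C)
    (hg''bdd : ∃ C, ∀ t, |g'' t| ≤ C)
    (ξ2 : ℝ) (hξ2 : ξ2 = ∫ t, (K' t) ^ 2)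
    (a : ℕ → ℝ → Ω → ℝ)
    (ha : ∀ n x ω, a n x ω = f (X n ω) * ((1 / h n ^ 2) * K' ((x - X n ω) / h n)))
    (A : ℕ → ℝ → Ω → ℝ)
    (hA : ∀ n x ω, A n x ω = ∑ k ∈ Finset.Icc 1 n, a k x ω)
    :
    ∀ x : ℝ,
      Tendsto (fun n : ℕ => variance (A n x) ℙ / (n : ℝ) ^ (1 + 3 * α))
        atTop (𝓝 (ξ2 * f x ^ 2 * g x / (1 + 3 * α))) := by
  intro x
  obtain ⟨Cf, hCf⟩ := hfbdd
  obtain ⟨Cg, hCg⟩ := hgbdd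
  obtain ⟨Cf', hCf'⟩ := hf'bdd
  obtain ⟨Cg', hCg'⟩ := hg'bdd
  obtain ⟨CK', hCK'⟩ := hK'bdd
  have hCf0 : 0 ≤ Cf := le_trans (abs_nonneg _) (hCf 0)
  have hCg0 : 0 ≤ Cg := le_trans (abs_nonneg _) (hCg 0)
  have hCf'0 : 0 ≤ Cf' := le_trans (abs_nonneg _) (hCf' 0)
  have hCg'0 : 0 ≤ Cg' := le_trans (abs_nonneg _) (hCg' 0)
  have hCK'0 : 0 ≤ CK' := le_trans (abs_nonneg _) (hCK' 0)
  -- continuity and measurability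
  have hfd : Differentiable ℝ f := fun t => (hf t).differentiableAt
  have hgd : Differentiable ℝ g := fun t => (hg t).differentiableAt
  have hfc : Continuous f := hfd.continuous
  have hgc : Continuous g := hgd.continuous
  have hK'eq : K' = deriv K := funext fun t => ((hKderiv t).deriv).symm
  have hK'meas : Measurable K' := by rw [hK'eq]; exact measurable_deriv K
  -- integrability of K' and (K')^2 and |u K' u|
  have hiuK' : Integrable (fun t : ℝ => t * K' t) := by
    by_contra hni
    rw [integral_undef hni] at hK'mom1
    norm_num at hK'mom1
  have hiK' : Integrable K' := by
    have hb : Integrable (fun t : ℝ => |t * K' t| +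
        Set.indicator (Set.Icc (-1 : ℝ) 1) (fun _ => CK') t) := by
      apply hiuK'.abs.add
      apply (IntegrableOn.integrable_indicator _ measurableSet_Icc)
      refine (integrableOn_const_iff (C := CK')).mpr ?_
      right
      rw [Real.volume_Icc]
      norm_num
    apply hb.mono hK'meas.aestronglyMeasurable
    filter_upwards with t
    have h3 : 0 ≤ Set.indicator (Set.Icc (-1 : ℝ) 1) (fun _ => CK') t :=
      Set.indicator_nonneg (fun _ _ => hCK'0) t
    have h4 : 0 ≤ |t * K' t| := abs_nonneg _
    have key : |K' t| ≤ |t * K' t| + Set.indicator (Set.Icc (-1 : ℝ) 1) (fun _ => CK') t := by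
      by_cases ht : |t| ≤ 1
      · have h1 : Set.indicator (Set.Icc (-1 : ℝ) 1) (fun _ => CK') t = CK' := by
          apply Set.indicator_of_mem
          rw [Set.mem_Icc]
          constructor <;> linarith [abs_le.1 ht]
        rw [h1]
        linarith [hCK' t]
      · push_neg at ht
        have h2 : |K' t| ≤ |t * K' t| := by
          rw [abs_mul]
          nlinarith [abs_nonneg (K' t), abs_nonneg t]
        linarith
    rw [Real.norm_eq_abs, Real.norm_eq_abs]
    exact key.trans (le_abs_self _)
  have hiK'sq : Integrable (fun t : ℝ => K' t ^ 2) := by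
    apply (hiK'.const_mul CK').mono
      ((hK'meas.pow_const 2).aestronglyMeasurable)
    filter_upwards with t
    rw [Real.norm_eq_abs, Real.norm_eq_abs, abs_of_nonneg (sq_nonneg _), abs_mul,
      abs_of_nonneg hCK'0]
    nlinarith [hCK' t, abs_nonneg (K' t), sq_abs (K' t)]
  have hiabsuK' : Integrable (fun t : ℝ => |t * K' t|) := hiuK'.abs
  -- the composed functions
  set φ : ℕ → ℝ → ℝ := fun k y => f y * ((1 / h k ^ 2) * K' ((x - y) / h k)) with hφ
  have hφmeas : ∀ k, Measurable (φ k) := by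
    intro k
    apply (hfc.measurable).mul
    apply Measurable.const_mul
    exact hK'meas.comp ((measurable_const.sub measurable_id).div_const (h k))
  have haφ : ∀ k, a k x = fun ω => φ k (X k ω) := by
    intro k; funext ω; rw [ha]
  have hameas : ∀ k, Measurable (a k x) := by
    intro k; rw [haφ k]; exact (hφmeas k).comp (hXmeas k)
  have habd : ∀ k ω, |a k x ω| ≤ Cf * ((1 / h k ^ 2) * CK') := by
    intro k ω
    rw [ha, abs_mul, abs_mul]
    have h1 : |1 / h k ^ 2| = 1 / h k ^ 2 := abs_of_nonneg (by positivity)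
    rw [h1]
    apply mul_le_mul (hCf _) (mul_le_mul_of_nonneg_left (hCK' _) (by positivity))
      (by positivity) hCf0
  have hmem : ∀ k, MemLp (a k x) 2 ℙ := by
    intro k
    apply MemLp.mono_exponent (q := ⊤) _ le_top
    apply memLp_top_of_bound ((hameas k).aestronglyMeasurable) (Cf * ((1 / h k ^ 2) * CK'))
    filter_upwards with ω
    rw [Real.norm_eq_abs]
    exact habd k ω
  -- variance of the sum
  have hvarsum : ∀ n : ℕ, variance (A n x) ℙ = ∑ k ∈ Finset.Icc 1 n, variance (a k x) ℙ := by
    intro n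
    have hAeq : A n x = ∑ k ∈ Finset.Icc 1 n, a k x := by
      funext ω
      rw [hA]
      simp [Finset.sum_apply]
    rw [hAeq]
    apply IndepFun.variance_sum (fun k _ => hmem k)
    intro i _ j _ hij
    rw [haφ i, haφ j]
    exact (hXindep.indepFun hij).comp (hφmeas i) (hφmeas j)
  -- transfer to the law
  have hlaw_int : ∀ (k : ℕ) (ψ : ℝ → ℝ), Measurable ψ →
      (∫ ω, ψ (X k ω) ∂ℙ) = ∫ y, g y * ψ y := by
    intro k ψ hψ
    rw [← integral_map (hXmeas k).aemeasurable hψ.aestronglyMeasurable, hXlaw k]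
    have e0 : (fun t => ENNReal.ofReal (g t)) = fun t => ((g t).toNNReal : ℝ≥0∞) := rfl
    rw [e0, integral_withDensity_eq_integral_smul hgc.measurable.real_toNNReal ψ]
    congr 1
    funext y
    rw [NNReal.smul_def, smul_eq_mul, Real.coe_toNNReal _ (hgpos y).le]
  -- positivity of bandwidth
  have hkpos : ∀ k : ℕ, 1 ≤ k → 0 < h k := by
    intro k hk
    rw [hband]
    exact Real.rpow_pos_of_pos (by exact_mod_cast hk) _
  -- the limiting integrals
  set V : ℝ → ℝ := fun s => ∫ u, (f (x - s * u) ^ 2 * g (x - s * u)) * K' u ^ 2 with hV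
  -- second moment identity
  have hE2 : ∀ k : ℕ, 1 ≤ k →
      (∫ ω, (a k x ω) ^ 2 ∂ℙ) = (k : ℝ) ^ (3 * α) * V (h k) := by
    intro k hk
    have hkp := hkpos k hk
    have hkne : h k ≠ 0 := hkp.ne'
    have step1 : (∫ ω, (a k x ω) ^ 2 ∂ℙ) = ∫ y, g y * (φ k y) ^ 2 := by
      rw [← hlaw_int k (fun y => (φ k y) ^ 2) ((hφmeas k).pow_const 2)]
      congr 1
      funext ω
      rw [haφ k]
    rw [step1]
    have step2 : (fun y => g y * (φ k y) ^ 2)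
        = fun y => (1 / h k ^ 2) ^ 2 * ((f y ^ 2 * g y) * K' ((x - y) / h k) ^ 2) := by
      funext y
      rw [hφ]
      ring
    rw [step2, integral_const_mul]
    have step3 : (fun y : ℝ => (f y ^ 2 * g y) * K' ((x - y) / h k) ^ 2)
        = fun y : ℝ => (fun u => (f (x - h k * u) ^ 2 * g (x - h k * u)) * K' u ^ 2)
            ((x - y) / h k) := by
      funext y
      show _ = (f (x - h k * ((x - y) / h k)) ^ 2 * g (x - h k * ((x - y) / h k)))
          * K' ((x - y) / h k) ^ 2
      have e : x - h k * ((x - y) / h k) = y := by field_simp; ring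
      rw [e]
    have comb : (∫ y : ℝ, (f y ^ 2 * g y) * K' ((x - y) / h k) ^ 2)
        = h k * V (h k) := by
      calc (∫ y : ℝ, (f y ^ 2 * g y) * K' ((x - y) / h k) ^ 2)
          = ∫ t : ℝ, (fun u => (f (x - h k * u) ^ 2 * g (x - h k * u)) * K' u ^ 2)
              ((x - t) / h k) := by rw [step3]
        _ = h k * V (h k) :=
            my_sub1 (fun u => (f (x - h k * u) ^ 2 * g (x - h k * u)) * K' u ^ 2) x (h k) hkp
    rw [comb]
    have hkcast : (0:ℝ) < (k:ℝ) := by exact_mod_cast hk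
    have hy : (0:ℝ) < (k:ℝ) ^ α := Real.rpow_pos_of_pos hkcast α
    have e1 : h k = ((k:ℝ) ^ α)⁻¹ := by rw [hband, Real.rpow_neg hkcast.le]
    have e2 : (k:ℝ) ^ (3*α) = ((k:ℝ) ^ α) ^ (3:ℕ) := by
      rw [← Real.rpow_natCast ((k:ℝ)^α) 3, ← Real.rpow_mul hkcast.le]
      norm_num
      ring_nf
    rw [e1, e2]
    have hyne : ((k:ℝ) ^ α) ≠ 0 := hy.ne'
    field_simp
  -- first moment bound
  set G : ℝ → ℝ := fun y => g y * f y with hG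
  have hGc : Continuous G := hgc.mul hfc
  have hGd : ∀ t, HasDerivAt G (g' t * f t + g t * f' t) t := fun t => (hg t).mul (hf t)
  set CL : ℝ := Cg' * Cf + Cg * Cf' with hCL
  have hCL0 : 0 ≤ CL := by positivity
  have hGlip : ∀ s t : ℝ, |G s - G t| ≤ CL * |s - t| := by
    intro s t
    have hb : ∀ u ∈ Set.univ, ‖g' u * f u + g u * f' u‖ ≤ CL := by
      intro u _
      rw [Real.norm_eq_abs]
      calc |g' u * f u + g u * f' u| ≤ |g' u * f u| + |g u * f' u| := abs_add_le _ _
        _ = |g' u| * |f u| + |g u| * |f' u| := by rw [abs_mul, abs_mul]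
        _ ≤ Cg' * Cf + Cg * Cf' := by
            apply add_le_add
            · exact mul_le_mul (hCg' u) (hCf u) (abs_nonneg _) hCg'0
            · exact mul_le_mul (hCg u) (hCf' u) (abs_nonneg _) hCg0
    have := Convex.norm_image_sub_le_of_norm_hasDerivWithin_le
      (fun u _ => (hGd u).hasDerivWithinAt) hb convex_univ
      (Set.mem_univ t) (Set.mem_univ s)
    simpa [Real.norm_eq_abs] using this
  set I1 : ℝ := ∫ u : ℝ, |u * K' u| with hI1
  have hI1nn : 0 ≤ I1 := integral_nonneg fun u => abs_nonneg _
  set M : ℝ := CL * I1 with hM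
  have hM0 : 0 ≤ M := by positivity
  have hE1bd : ∀ k : ℕ, 1 ≤ k → |∫ ω, a k x ω ∂ℙ| ≤ M := by
    intro k hk
    have hkp := hkpos k hk
    have hkne : h k ≠ 0 := hkp.ne'
    have step1 : (∫ ω, a k x ω ∂ℙ) = ∫ y, g y * φ k y := by
      rw [← hlaw_int k (φ k) (hφmeas k)]
      congr 1
      funext ω
      rw [haφ k]
    have step2 : (fun y => g y * φ k y)
        = fun y => (1 / h k ^ 2) * (G y * K' ((x - y) / h k)) := by
      funext y
      rw [hφ, hG]
      ring
    have step3 : (fun y : ℝ => G y * K' ((x - y) / h k))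
        = fun y : ℝ => (fun u => G (x - h k * u) * K' u) ((x - y) / h k) := by
      funext y
      show _ = G (x - h k * ((x - y) / h k)) * K' ((x - y) / h k)
      have e : x - h k * ((x - y) / h k) = y := by field_simp; ring
      rw [e]
    have comb : (∫ y : ℝ, G y * K' ((x - y) / h k))
        = h k * ∫ u : ℝ, G (x - h k * u) * K' u := by
      calc (∫ y : ℝ, G y * K' ((x - y) / h k))
          = ∫ t : ℝ, (fun u => G (x - h k * u) * K' u) ((x - t) / h k) := by rw [step3]
        _ = h k * ∫ u : ℝ, G (x - h k * u) * K' u :=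
            my_sub1 (fun u => G (x - h k * u) * K' u) x (h k) hkp
    have hWint : Integrable (fun u : ℝ => G (x - h k * u) * K' u) := by
      apply hiK'.bdd_mul (c := Cg * Cf)
      · exact (hGc.comp (continuous_const.sub (continuous_const.mul continuous_id))).aestronglyMeasurable
      · refine Eventually.of_forall fun u => ?_
        rw [Real.norm_eq_abs, hG]
        calc |g (x - h k * u) * f (x - h k * u)|
            = |g (x - h k * u)| * |f (x - h k * u)| := abs_mul _ _
          _ ≤ Cg * Cf := mul_le_mul (hCg _) (hCf _) (abs_nonneg _) hCg0
    have hWsub : (∫ u : ℝ, G (x - h k * u) * K' u)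
        = ∫ u : ℝ, (G (x - h k * u) - G x) * K' u := by
      have e : (fun u : ℝ => (G (x - h k * u) - G x) * K' u)
          = fun u : ℝ => G (x - h k * u) * K' u - G x * K' u := by
        funext u; ring
      rw [e, integral_sub hWint (hiK'.const_mul (G x)), integral_const_mul, hK'int,
        mul_zero, sub_zero]
    have hWbd : |∫ u : ℝ, (G (x - h k * u) - G x) * K' u| ≤ CL * (h k * I1) := by
      rw [← Real.norm_eq_abs]
      have hbint : Integrable (fun u : ℝ => CL * (h k * |u * K' u|)) :=
        (hiabsuK'.const_mul (h k)).const_mul CL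
      calc ‖∫ u : ℝ, (G (x - h k * u) - G x) * K' u‖
          ≤ ∫ u : ℝ, CL * (h k * |u * K' u|) := by
            apply norm_integral_le_of_norm_le hbint
            filter_upwards with u
            rw [Real.norm_eq_abs, abs_mul]
            have h1 : |G (x - h k * u) - G x| ≤ CL * (h k * |u|) := by
              have h2 := hGlip (x - h k * u) x
              have e : |x - h k * u - x| = h k * |u| := by
                rw [show x - h k * u - x = -(h k * u) by ring, abs_neg, abs_mul,
                  abs_of_pos hkp]
              rw [e] at h2
              linarith
            calc |G (x - h k * u) - G x| * |K' u| ≤ (CL * (h k * |u|)) * |K' u| :=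
                  mul_le_mul_of_nonneg_right h1 (abs_nonneg _)
              _ = CL * (h k * |u * K' u|) := by rw [abs_mul]; ring
        _ = CL * (h k * I1) := by rw [integral_const_mul, integral_const_mul]
    have efin : (∫ ω, a k x ω ∂ℙ)
        = (1 / h k ^ 2) * (h k * ∫ u : ℝ, (G (x - h k * u) - G x) * K' u) := by
      rw [step1, step2, integral_const_mul, comb, hWsub]
    rw [efin]
    rw [abs_mul, abs_mul, abs_of_nonneg (show (0:ℝ) ≤ 1 / h k ^ 2 by positivity),
      abs_of_pos hkp]
    calc (1 / h k ^ 2) * (h k * |∫ u : ℝ, (G (x - h k * u) - G x) * K' u|)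
        ≤ (1 / h k ^ 2) * (h k * (CL * (h k * I1))) := by
          apply mul_le_mul_of_nonneg_left _ (by positivity)
          exact mul_le_mul_of_nonneg_left hWbd hkp.le
      _ = M := by rw [hM]; field_simp
  -- limit of V along the bandwidths
  have hh0 : Tendsto (fun k : ℕ => h k) atTop (𝓝 0) := by
    have h1 : Tendsto (fun y : ℝ => y ^ (-α)) atTop (𝓝 0) := tendsto_rpow_neg_atTop hα0
    have h2 := h1.comp (tendsto_natCast_atTop_atTop (R := ℝ))
    apply h2.congr
    intro k
    simp [Function.comp, hband]
  have hVlim : Tendsto (fun k : ℕ => V (h k)) atTop (𝓝 ((f x ^ 2 * g x) * ξ2)) := by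
    rw [hξ2]
    have hbound : Integrable (fun u : ℝ => (Cf ^ 2 * Cg) * K' u ^ 2) := hiK'sq.const_mul _
    have hdct : Tendsto (fun k : ℕ => ∫ u : ℝ, (f (x - h k * u) ^ 2 * g (x - h k * u)) * K' u ^ 2)
        atTop (𝓝 (∫ u : ℝ, (f x ^ 2 * g x) * K' u ^ 2)) := by
      apply tendsto_integral_filter_of_dominated_convergence
        (fun u : ℝ => (Cf ^ 2 * Cg) * K' u ^ 2) ?_ ?_ hbound ?_
      · filter_upwards with k
        have c1 : Continuous fun u : ℝ => x - h k * u :=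
          continuous_const.sub (continuous_const.mul continuous_id)
        exact ((((hfc.comp c1).pow 2).mul (hgc.comp c1)).measurable.mul
          (hK'meas.pow_const 2)).aestronglyMeasurable
      · filter_upwards with k
        filter_upwards with u
        rw [Real.norm_eq_abs, abs_mul, abs_of_nonneg (sq_nonneg (K' u))]
        apply mul_le_mul_of_nonneg_right _ (sq_nonneg _)
        calc |f (x - h k * u) ^ 2 * g (x - h k * u)|
            = |f (x - h k * u)| ^ 2 * |g (x - h k * u)| := by
              rw [abs_mul, abs_of_nonneg (sq_nonneg _), ← sq_abs]
          _ ≤ Cf ^ 2 * Cg := by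
              apply mul_le_mul _ (hCg _) (abs_nonneg _) (by positivity)
              exact pow_le_pow_left₀ (abs_nonneg _) (hCf _) 2
      · filter_upwards with u
        have harg : Tendsto (fun k : ℕ => x - h k * u) atTop (𝓝 x) := by
          have h3 := (tendsto_const_nhds (x := x) (f := atTop (α := ℕ))).sub (hh0.mul_const u)
          simpa using h3
        have hfn : Tendsto (fun k : ℕ => f (x - h k * u)) atTop (𝓝 (f x)) :=
          (hfc.tendsto x).comp harg
        have hgn : Tendsto (fun k : ℕ => g (x - h k * u)) atTop (𝓝 (g x)) :=
          (hgc.tendsto x).comp harg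
        exact ((hfn.pow 2).mul hgn).mul_const _
    rw [integral_const_mul] at hdct
    exact hdct
  -- the squared means vanish after normalization
  have hE1sq : Tendsto (fun k : ℕ => (∫ ω, a k x ω ∂ℙ) ^ 2 / (k : ℝ) ^ (3 * α))
      atTop (𝓝 0) := by
    have hbnd : Tendsto (fun k : ℕ => M ^ 2 * (((k : ℝ) ^ (3 * α))⁻¹)) atTop (𝓝 0) := by
      have h1 : Tendsto (fun k : ℕ => (k : ℝ) ^ (3 * α)) atTop atTop :=
        (tendsto_rpow_atTop (by positivity)).comp (tendsto_natCast_atTop_atTop (R := ℝ))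
      have h2 := h1.inv_tendsto_atTop
      have h3 := h2.const_mul (M ^ 2)
      simpa using h3
    apply squeeze_zero (fun k => div_nonneg (sq_nonneg _)
      (Real.rpow_nonneg (Nat.cast_nonneg k) _)) _ hbnd
    intro k
    rw [div_eq_mul_inv, mul_comm (M ^ 2) _, mul_comm _ ((((k : ℝ)) ^ (3 * α))⁻¹)]
    apply mul_le_mul_of_nonneg_left _ (by positivity)
    rcases Nat.eq_zero_or_pos k with hk | hk
    · subst hk
      have h00 : h 0 = 0 := by
        rw [hband]
        norm_num
        exact Real.zero_rpow (neg_ne_zero.2 hα0.ne')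
      have ha0 : a 0 x = fun _ => (0:ℝ) := by
        funext ω
        rw [ha, h00]
        norm_num
      rw [ha0]
      simp
      positivity
    · have hb := hE1bd k hk
      have := abs_le.1 hb
      exact sq_le_sq' (by linarith [this.1]) this.2
  -- per-term variance limit
  have hveq : ∀ᶠ k in atTop, variance (a k x) ℙ / (k : ℝ) ^ (3 * α)
      = V (h k) - (∫ ω, a k x ω ∂ℙ) ^ 2 / (k : ℝ) ^ (3 * α) := by
    filter_upwards [eventually_ge_atTop 1] with k hk
    have hkcast : (0:ℝ) < (k:ℝ) := by exact_mod_cast hk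
    have hkp3 : (0:ℝ) < (k:ℝ) ^ (3*α) := Real.rpow_pos_of_pos hkcast _
    have hvd := variance_eq_sub (hmem k)
    have e2 : (∫ ω, ((a k x) ^ 2) ω ∂ℙ) = (k : ℝ) ^ (3 * α) * V (h k) := by
      exact hE2 k hk
    rw [hvd, e2]
    field_simp
  have hvlim : Tendsto (fun k : ℕ => variance (a k x) ℙ / (k : ℝ) ^ (3 * α))
      atTop (𝓝 (ξ2 * f x ^ 2 * g x)) := by
    have h4 := hVlim.sub hE1sq
    rw [sub_zero] at h4
    rw [show ξ2 * f x ^ 2 * g x = f x ^ 2 * g x * ξ2 by ring]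
    exact h4.congr' (by filter_upwards [hveq] with k hk using hk.symm)
  -- conclusion
  have hfinal := my_cesaro (3 * α) (by positivity)
    (fun k => variance (a k x) ℙ / (k : ℝ) ^ (3 * α)) _ hvlim
  rw [show (1 : ℝ) + 3 * α = 3 * α + 1 by ring]
  apply hfinal.congr
  intro n
  rw [hvarsum n]
  congr 1
  apply Finset.sum_congr rfl
  intro k hk
  have hk1 : 1 ≤ k := (Finset.mem_Icc.1 hk).1
  have hkcast : (0:ℝ) < (k:ℝ) := by exact_mod_cast hk1
  have hkp3 : ((k:ℝ) ^ (3*α)) ≠ 0 := (Real.rpow_pos_of_pos hkcast _).ne'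
  rw [mul_div_assoc']
  exact mul_div_cancel_left₀ _ hkp3
end

section
/- Second-moment expansion of the kernel derivative: let v_n(X_n,x) = (1/h_n²)K′((x−X_n)/h_n), where X_n has density g. Under assumptions (A1)–(A2), E[v_n²(X_n,x)] = ξ² g(x)/h_n³ + Δ_n(x) with sup_{x∈ℝ}|Δ_n(x)| = O(h_n^{−2}), where ξ² = ∫(K′(y))²dy. Consequently, with W_n(x) = ∑_{k=1}^n v_k²(X_k,x), lim_{n→∞} E[W_n(x)]/n^{1+3α} = ξ² g(x)/(1+3α) for every x ∈ ℝ. -/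
open MeasureTheory ProbabilityTheory Filter Real Finset
open scoped ENNReal NNReal Topology

lemma aux_sum_rpow (p : ℝ) (hp : 0 < p) :
    Tendsto (fun n : ℕ => (∑ k ∈ Finset.Icc 1 n, ((k : ℝ)) ^ p) / (n : ℝ) ^ (1 + p))
      atTop (𝓝 (1 / (1 + p))) := by
  have hp1 : 0 < 1 + p := by linarith
  have hii : ∀ a b : ℝ, IntervalIntegrable (fun t : ℝ => t ^ p) volume a b :=
    fun a b => intervalIntegral.intervalIntegrable_rpow (Or.inl (by linarith))
  have hIcc : ∀ n : ℕ, (∑ k ∈ Finset.Icc 1 n, ((k : ℝ)) ^ p)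
      = ∑ k ∈ Finset.range n, ((k : ℝ) + 1) ^ p := by
    intro n
    rw [← Finset.Ico_add_one_right_eq_Icc, Finset.sum_Ico_eq_sum_range]
    norm_num
    refine Finset.sum_congr rfl fun k _ => ?_
    push_cast; ring_nf
  -- lower bound
  have hlow : ∀ n : ℕ, (n : ℝ) ^ (1 + p) / (1 + p) ≤ ∑ k ∈ Finset.range n, ((k : ℝ) + 1) ^ p := by
    intro n
    have h1 : ∫ t in (0:ℝ)..(n:ℝ), t ^ p = (n : ℝ) ^ (1 + p) / (1 + p) := by
      rw [integral_rpow (Or.inl (by linarith))]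
      rw [Real.zero_rpow (by linarith : p + 1 ≠ 0)]
      rw [show p + 1 = 1 + p by ring]; ring
    have h2 : (∑ k ∈ Finset.range n, ∫ t in ((k:ℕ):ℝ)..(((k+1:ℕ)):ℝ), t ^ p)
        = ∫ t in ((0:ℕ):ℝ)..((n:ℕ):ℝ), t ^ p :=
      intervalIntegral.sum_integral_adjacent_intervals (fun k _ => hii _ _)
    have h3 : ∀ k ∈ Finset.range n, (∫ t in ((k:ℕ):ℝ)..(((k+1:ℕ)):ℝ), t ^ p) ≤ ((k:ℝ)+1) ^ p := by
      intro k _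
      have hle : (∫ t in ((k:ℕ):ℝ)..(((k+1:ℕ)):ℝ), t ^ p)
          ≤ ∫ _t in ((k:ℕ):ℝ)..(((k+1:ℕ)):ℝ), ((k:ℝ)+1) ^ p := by
        refine intervalIntegral.integral_mono_on (by push_cast; linarith) (hii _ _)
          intervalIntegrable_const (fun t ht => ?_)
        have ht0 : 0 ≤ t := le_trans (Nat.cast_nonneg k) ht.1
        have ht1 : t ≤ (k:ℝ) + 1 := by
          have := ht.2; push_cast at this; linarith
        exact Real.rpow_le_rpow ht0 ht1 hp.le
      refine hle.trans (le_of_eq ?_)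
      rw [intervalIntegral.integral_const]; push_cast
      rw [show (k:ℝ) + 1 - k = 1 by ring, one_smul]
    calc (n : ℝ) ^ (1 + p) / (1 + p) = ∫ t in (0:ℝ)..(n:ℝ), t ^ p := h1.symm
      _ = ∑ k ∈ Finset.range n, ∫ t in ((k:ℕ):ℝ)..(((k+1:ℕ)):ℝ), t ^ p := by
          rw [h2]; norm_num
      _ ≤ ∑ k ∈ Finset.range n, ((k:ℝ)+1) ^ p := Finset.sum_le_sum h3
  -- upper bound
  have hup : ∀ n : ℕ, (∑ k ∈ Finset.range n, ((k : ℝ) + 1) ^ p) ≤ ((n : ℝ) + 1) ^ (1 + p) / (1 + p) := by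
    intro n
    have h2 : (∑ k ∈ Finset.range n, ∫ t in (((k:ℕ):ℝ)+1)..((((k+1:ℕ)):ℝ)+1), t ^ p)
        = ∫ t in (((0:ℕ):ℝ)+1)..(((n:ℕ):ℝ)+1), t ^ p :=
      intervalIntegral.sum_integral_adjacent_intervals (a := fun k : ℕ => ((k:ℕ):ℝ)+1)
        (fun k _ => hii _ _)
    have h3 : ∀ k ∈ Finset.range n, ((k:ℝ)+1) ^ p ≤ ∫ t in (((k:ℕ):ℝ)+1)..((((k+1:ℕ)):ℝ)+1), t ^ p := by
      intro k _
      have hle : (∫ _t in (((k:ℕ):ℝ)+1)..((((k+1:ℕ)):ℝ)+1), ((k:ℝ)+1) ^ p)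
          ≤ ∫ t in (((k:ℕ):ℝ)+1)..((((k+1:ℕ)):ℝ)+1), t ^ p := by
        refine intervalIntegral.integral_mono_on (by push_cast; linarith)
          intervalIntegrable_const (hii _ _) (fun t ht => ?_)
        have hk1 : (0:ℝ) ≤ (k:ℝ) + 1 := by positivity
        exact Real.rpow_le_rpow hk1 ht.1 hp.le
      refine le_trans (le_of_eq ?_) hle
      rw [intervalIntegral.integral_const]; push_cast
      rw [show (k:ℝ) + 1 + 1 - ((k:ℝ) + 1) = 1 by ring, one_smul]
    have h4 : (∫ t in (((0:ℕ):ℝ)+1)..(((n:ℕ):ℝ)+1), t ^ p) ≤ ((n : ℝ) + 1) ^ (1 + p) / (1 + p) := by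
      rw [integral_rpow (Or.inl (by linarith))]
      have e1 : (((0:ℕ):ℝ)+1) ^ (p+1) = 1 := by norm_num
      rw [e1, show p + 1 = 1 + p by ring]
      push_cast
      have hnum : ((n:ℝ) + 1) ^ (1 + p) - 1 ≤ ((n:ℝ) + 1) ^ (1 + p) := by linarith
      gcongr
    calc (∑ k ∈ Finset.range n, ((k : ℝ) + 1) ^ p)
        ≤ ∑ k ∈ Finset.range n, ∫ t in (((k:ℕ):ℝ)+1)..((((k+1:ℕ)):ℝ)+1), t ^ p :=
          Finset.sum_le_sum h3
      _ = ∫ t in (((0:ℕ):ℝ)+1)..(((n:ℕ):ℝ)+1), t ^ p := h2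
      _ ≤ ((n : ℝ) + 1) ^ (1 + p) / (1 + p) := h4
  -- squeeze
  have hupfun : Tendsto (fun n : ℕ => (((n:ℝ)+1)/(n:ℝ)) ^ (1 + p) / (1 + p)) atTop (𝓝 (1 / (1 + p))) := by
    have h1 : Tendsto (fun n : ℕ => ((n:ℝ)+1)/(n:ℝ)) atTop (𝓝 1) := by
      have : Tendsto (fun n : ℕ => 1 + ((n:ℝ))⁻¹) atTop (𝓝 (1 + 0)) :=
        tendsto_const_nhds.add (tendsto_inv_atTop_zero.comp tendsto_natCast_atTop_atTop)
      rw [add_zero] at this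
      refine this.congr' ?_
      filter_upwards [eventually_ge_atTop 1] with n hn
      have : (0:ℝ) < n := by exact_mod_cast hn
      field_simp
    have h2 : Tendsto (fun x : ℝ => x ^ (1 + p)) (𝓝 1) (𝓝 (1 : ℝ)) := by
      have := (Real.continuousAt_rpow_const 1 (1 + p) (Or.inl one_ne_zero)).tendsto
      rwa [Real.one_rpow] at this
    simpa using ((h2.comp h1).div_const (1 + p))
  refine tendsto_of_tendsto_of_tendsto_of_le_of_le' tendsto_const_nhds hupfun ?_ ?_
  · filter_upwards [eventually_ge_atTop 1] with n hn
    have hn0 : (0:ℝ) < (n:ℝ) := by exact_mod_cast hn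
    have hq : (0:ℝ) < (n:ℝ) ^ (1 + p) := Real.rpow_pos_of_pos hn0 _
    rw [hIcc, div_le_div_iff₀ hp1 hq]
    have := hlow n
    rw [div_le_iff₀ hp1] at this
    linarith
  · filter_upwards [eventually_ge_atTop 1] with n hn
    have hn0 : (0:ℝ) < (n:ℝ) := by exact_mod_cast hn
    have hq : (0:ℝ) < (n:ℝ) ^ (1 + p) := Real.rpow_pos_of_pos hn0 _
    rw [hIcc]
    have hdr : (((n:ℝ)+1)/(n:ℝ)) ^ (1+p) = ((n:ℝ)+1)^(1+p) / (n:ℝ)^(1+p) :=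
      Real.div_rpow (by positivity) (by positivity) (1+p)
    calc (∑ k ∈ Finset.range n, ((k:ℝ)+1) ^ p) / (n:ℝ)^(1+p)
        ≤ (((n:ℝ)+1)^(1+p)/(1+p)) / (n:ℝ)^(1+p) := by gcongr; exact hup n
      _ = ((n:ℝ)+1)^(1+p) / (n:ℝ)^(1+p) / (1+p) := by ring
      _ = (((n:ℝ)+1)/(n:ℝ))^(1+p)/(1+p) := by rw [hdr]

theorem stmt_12
    {Ω : Type*} [MeasureSpace Ω] [IsProbabilityMeasure (ℙ : Measure Ω)]
    (α : ℝ) (hα0 : 0 < α) (hα1 : α < 1)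
    (h : ℕ → ℝ) (hband : ∀ n : ℕ, h n = (n : ℝ) ^ (-α))
    (X : ℕ → Ω → ℝ) (g : ℝ → ℝ)
    (hXmeas : ∀ n, Measurable (X n))
    (hXindep : iIndepFun X ℙ)
    (hgpos : ∀ t, 0 < g t)
    (hXlaw : ∀ n, Measure.map (X n) ℙ
      = volume.withDensity (fun t => ENNReal.ofReal (g t)))
    (f : ℝ → ℝ)
    (K K' : ℝ → ℝ)
    (hKpos : ∀ t, 0 ≤ K t)
    (hKsymm : ∀ t, K (-t) = K t)
    (hKbdd : ∃ C, ∀ t, K t ≤ C)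
    (hKderiv : ∀ t, HasDerivAt K (K' t) t)
    (hK'bdd : ∃ C, ∀ t, |K' t| ≤ C)
    (hKint : ∫ t, K t = 1)
    (hK'int : ∫ t, K' t = 0)
    (hK'mom1 : ∫ t, t * K' t = -1)
    (hK'mom2 : ∫ t, t ^ 2 * K' t = 0)
    (hKmom4 : Integrable (fun t => t ^ 4 * K t))
    (hK'mom4 : Integrable (fun t => t ^ 4 * |K' t|))
    (f' f'' : ℝ → ℝ)
    (hf : ∀ t, HasDerivAt f (f' t) t) (hf' : ∀ t, HasDerivAt f' (f'' t) t)
    (hfbdd : ∃ C, ∀ t, |f t| ≤ C) (hf'bdd : ∃ C, ∀ t, |f' t| ≤ C)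
    (hf''bdd : ∃ C, ∀ t, |f'' t| ≤ C)
    (g' g'' : ℝ → ℝ)
    (hg : ∀ t, HasDerivAt g (g' t) t) (hg' : ∀ t, HasDerivAt g' (g'' t) t)
    (hgbdd : ∃ C, ∀ t, |g t| ≤ C) (hg'bdd : ∃ C, ∀ t, |g' t| ≤ C)
    (hg''bdd : ∃ C, ∀ t, |g'' t| ≤ C)
    (ξ2 : ℝ) (hξ2 : ξ2 = ∫ t, (K' t) ^ 2)
    (v : ℕ → ℝ → Ω → ℝ)
    (hv : ∀ n x ω, v n x ω = (1 / h n ^ 2) * K' ((x - X n ω) / h n))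
    (W : ℕ → ℝ → Ω → ℝ)
    (hW : ∀ n x ω, W n x ω = ∑ k ∈ Finset.Icc 1 n, (v k x ω) ^ 2)
    :
    (∃ C : ℝ, 0 < C ∧ ∀ n : ℕ, 1 ≤ n → ∀ x : ℝ,
        |(∫ ω, (v n x ω) ^ 2 ∂ℙ) - ξ2 * g x / h n ^ 3| ≤ C / h n ^ 2) ∧
    ∀ x : ℝ,
      Tendsto (fun n : ℕ => (∫ ω, W n x ω ∂ℙ) / (n : ℝ) ^ (1 + 3 * α))
        atTop (𝓝 (ξ2 * g x / (1 + 3 * α))) := by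
  obtain ⟨CK, hCK⟩ := hK'bdd
  obtain ⟨Cg, hCg⟩ := hgbdd
  obtain ⟨Cg', hCg'⟩ := hg'bdd
  have hCK0 : 0 ≤ CK := le_trans (abs_nonneg _) (hCK 0)
  have hCg0 : 0 ≤ Cg := le_trans (abs_nonneg _) (hCg 0)
  have hCg'0 : 0 ≤ Cg' := le_trans (abs_nonneg _) (hCg' 0)
  have hK'eq : K' = deriv K := funext fun t => ((hKderiv t).deriv).symm
  have hK'meas : Measurable K' := hK'eq ▸ measurable_deriv K
  have hgcont : Continuous g := by
    rw [continuous_iff_continuousAt]; exact fun t => (hg t).continuousAt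
  have hgmeas : Measurable g := hgcont.measurable
  -- Lipschitz bound on g
  have hgLip : ∀ a b : ℝ, |g a - g b| ≤ Cg' * |a - b| := by
    intro a b
    have := Convex.norm_image_sub_le_of_norm_hasDerivWithin_le
      (f := g) (f' := g') (s := Set.univ) (C := Cg')
      (fun x _ => (hg x).hasDerivWithinAt) (fun x _ => hCg' x) convex_univ
      (Set.mem_univ b) (Set.mem_univ a)
    simpa [Real.norm_eq_abs] using this
  -- dominating function
  set D : ℝ → ℝ := fun t => CK * Set.indicator (Set.Icc (-1:ℝ) 1) (fun _ => (1:ℝ)) t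
      + t ^ 4 * |K' t| with hD
  have hDint : Integrable D := by
    refine Integrable.add (Integrable.const_mul ?_ CK) hK'mom4
    rw [integrable_indicator_iff measurableSet_Icc]
    exact integrableOn_const measure_Icc_lt_top.ne
  have hDb1 : ∀ t : ℝ, |K' t| ≤ D t := by
    intro t
    rcases le_or_gt |t| 1 with h1 | h1
    · have : Set.indicator (Set.Icc (-1:ℝ) 1) (fun _ => (1:ℝ)) t = 1 := by
        rw [Set.indicator_of_mem]; exact abs_le.1 h1 |> fun ⟨a, b⟩ => ⟨a, b⟩
      rw [hD]; simp only [this]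
      have h4 : 0 ≤ t ^ 4 * |K' t| := by positivity
      have := hCK t
      nlinarith
    · have h4 : (1:ℝ) ≤ t ^ 4 := by
        calc (1:ℝ) ≤ |t| ^ 4 := one_le_pow₀ h1.le
          _ = t ^ 4 := by rw [← abs_pow, abs_of_nonneg (by positivity)]
      have : |K' t| ≤ t ^ 4 * |K' t| := le_mul_of_one_le_left (abs_nonneg _) h4
      rw [hD]
      have hind : 0 ≤ CK * Set.indicator (Set.Icc (-1:ℝ) 1) (fun _ => (1:ℝ)) t := by
        apply mul_nonneg hCK0 (Set.indicator_nonneg (fun _ _ => zero_le_one) t)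
      dsimp only; linarith
  have hDb2 : ∀ t : ℝ, |t| * |K' t| ≤ D t := by
    intro t
    rcases le_or_gt |t| 1 with h1 | h1
    · calc |t| * |K' t| ≤ 1 * |K' t| := by
            exact mul_le_mul_of_nonneg_right h1 (abs_nonneg _)
        _ = |K' t| := one_mul _
        _ ≤ D t := hDb1 t
    · have h4 : |t| ≤ t ^ 4 := by
        calc |t| ≤ |t| ^ 4 := le_self_pow₀ h1.le (by norm_num)
          _ = t ^ 4 := by rw [← abs_pow, abs_of_nonneg (by positivity)]
      have : |t| * |K' t| ≤ t ^ 4 * |K' t| := mul_le_mul_of_nonneg_right h4 (abs_nonneg _)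
      have hind : 0 ≤ CK * Set.indicator (Set.Icc (-1:ℝ) 1) (fun _ => (1:ℝ)) t :=
        mul_nonneg hCK0 (Set.indicator_nonneg (fun _ _ => zero_le_one) t)
      rw [hD]; dsimp only; linarith
  -- integrability of K'^2 and |t| K'^2
  have hint1 : Integrable (fun t : ℝ => (K' t) ^ 2) := by
    refine (hDint.const_mul CK).mono' ((hK'meas.pow_const 2).aestronglyMeasurable) ?_
    refine Filter.Eventually.of_forall fun t => ?_
    rw [Real.norm_eq_abs, abs_of_nonneg (by positivity)]
    calc (K' t) ^ 2 = |K' t| * |K' t| := by rw [pow_two, ← abs_mul_self (K' t), abs_mul]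
      _ ≤ CK * |K' t| := mul_le_mul_of_nonneg_right (hCK t) (abs_nonneg _)
      _ ≤ CK * D t := mul_le_mul_of_nonneg_left (hDb1 t) hCK0
  have hint2 : Integrable (fun t : ℝ => |t| * (K' t) ^ 2) := by
    refine (hDint.const_mul CK).mono'
      ((measurable_abs.mul (hK'meas.pow_const 2)).aestronglyMeasurable) ?_
    refine Filter.Eventually.of_forall fun t => ?_
    rw [Real.norm_eq_abs, abs_of_nonneg (by positivity)]
    calc |t| * (K' t) ^ 2 = |K' t| * (|t| * |K' t|) := by
          rw [pow_two, ← abs_mul_self (K' t), abs_mul]; ring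
      _ ≤ CK * (|t| * |K' t|) := by
          refine mul_le_mul_of_nonneg_right (hCK t) (by positivity)
      _ ≤ CK * D t := mul_le_mul_of_nonneg_left (hDb2 t) hCK0
  set M : ℝ := ∫ t, |t| * (K' t) ^ 2 with hM
  have hM0 : 0 ≤ M := integral_nonneg fun t => by positivity
  -- the key identity
  have key : ∀ n : ℕ, 1 ≤ n → ∀ x : ℝ,
      ∫ ω, (v n x ω) ^ 2 ∂ℙ
        = (1 / h n ^ 3) * ∫ y, (K' y) ^ 2 * g (x - h n * y) := by
    intro n hn x
    have hn0 : (0:ℝ) < (n:ℝ) := by exact_mod_cast hn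
    have hhn : 0 < h n := by rw [hband]; exact Real.rpow_pos_of_pos hn0 _
    set c := h n with hc
    have hFm : Measurable fun t : ℝ => (1 / c ^ 4) * (K' ((x - t) / c)) ^ 2 := by
      apply Measurable.const_mul
      exact (hK'meas.comp ((measurable_const.sub measurable_id).div_const c)).pow_const 2
    have e1 : ∫ ω, (v n x ω) ^ 2 ∂ℙ
        = ∫ ω, (1 / c ^ 4) * (K' ((x - X n ω) / c)) ^ 2 ∂ℙ := by
      congr 1; funext ω
      rw [hv]; rw [mul_pow]; congr 1
      rw [← hc]; ring
    have e2 : ∫ ω, (1 / c ^ 4) * (K' ((x - X n ω) / c)) ^ 2 ∂ℙ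
        = ∫ t, (1 / c ^ 4) * (K' ((x - t) / c)) ^ 2 ∂(Measure.map (X n) ℙ) :=
      (integral_map (hXmeas n).aemeasurable hFm.aestronglyMeasurable).symm
    have e3 : ∫ t, (1 / c ^ 4) * (K' ((x - t) / c)) ^ 2 ∂(Measure.map (X n) ℙ)
        = ∫ t, g t * ((1 / c ^ 4) * (K' ((x - t) / c)) ^ 2) := by
      rw [hXlaw n]
      have hofreal : (fun t : ℝ => ENNReal.ofReal (g t))
          = fun t => ((g t).toNNReal : ℝ≥0∞) := rfl
      rw [hofreal, integral_withDensity_eq_integral_smul hgmeas.real_toNNReal _]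
      congr 1; funext t
      rw [NNReal.smul_def, smul_eq_mul, Real.coe_toNNReal _ (hgpos t).le]
    have e4 : ∫ t, g t * ((1 / c ^ 4) * (K' ((x - t) / c)) ^ 2)
        = ∫ s, (1 / c ^ 4) * ((K' (s / c)) ^ 2 * g (x - s)) := by
      rw [← integral_sub_left_eq_self
        (fun s => (1 / c ^ 4) * ((K' (s / c)) ^ 2 * g (x - s))) volume x]
      congr 1; funext t
      simp only [sub_sub_cancel]
      ring
    have e5 : ∫ s, (1 / c ^ 4) * ((K' (s / c)) ^ 2 * g (x - s))
        = c * ∫ y, (1 / c ^ 4) * ((K' y) ^ 2 * g (x - c * y)) := by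
      have hG : ∀ s : ℝ, (1 / c ^ 4) * ((K' (s / c)) ^ 2 * g (x - s))
          = (fun y => (1 / c ^ 4) * ((K' y) ^ 2 * g (x - c * y))) (s / c) := by
        intro s; dsimp only
        rw [mul_div_cancel₀ _ hhn.ne']
      rw [show (fun s : ℝ => (1 / c ^ 4) * ((K' (s / c)) ^ 2 * g (x - s)))
          = (fun s : ℝ => (fun y => (1 / c ^ 4) * ((K' y) ^ 2 * g (x - c * y))) (s / c))
        from funext hG]
      rw [MeasureTheory.Measure.integral_comp_div
        (fun y : ℝ => (1 / c ^ 4) * ((K' y) ^ 2 * g (x - c * y))) c]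
      rw [abs_of_pos hhn, smul_eq_mul]
    have e6 : c * ∫ y, (1 / c ^ 4) * ((K' y) ^ 2 * g (x - c * y))
        = (1 / c ^ 3) * ∫ y, (K' y) ^ 2 * g (x - c * y) := by
      rw [integral_const_mul]
      field_simp
    rw [e1, e2, e3, e4, e5, e6]
  -- uniform remainder bound
  have hDelta : ∀ n : ℕ, 1 ≤ n → ∀ x : ℝ,
      |(∫ ω, (v n x ω) ^ 2 ∂ℙ) - ξ2 * g x / h n ^ 3| ≤ (Cg' * M) / h n ^ 2 := by
    intro n hn x
    have hn0 : (0:ℝ) < (n:ℝ) := by exact_mod_cast hn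
    have hhn : 0 < h n := by rw [hband]; exact Real.rpow_pos_of_pos hn0 _
    set c := h n with hc
    have hI1 : Integrable (fun y : ℝ => (K' y) ^ 2 * g (x - c * y)) := by
      refine (hint1.const_mul Cg).mono'
        (((hK'meas.pow_const 2).mul
          (hgmeas.comp (measurable_const.sub (measurable_id.const_mul c)))).aestronglyMeasurable) ?_
      refine Filter.Eventually.of_forall fun y => ?_
      rw [Real.norm_eq_abs, abs_mul, abs_of_nonneg (by positivity : (0:ℝ) ≤ (K' y)^2)]
      calc (K' y) ^ 2 * |g (x - c * y)| ≤ (K' y) ^ 2 * Cg :=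
            mul_le_mul_of_nonneg_left (hCg _) (by positivity)
        _ = Cg * (K' y) ^ 2 := by ring
    have hI2 : Integrable (fun y : ℝ => (K' y) ^ 2 * g x) := hint1.mul_const (g x)
    have hsub : (∫ y, (K' y) ^ 2 * g (x - c * y)) - ξ2 * g x
        = ∫ y, (K' y) ^ 2 * (g (x - c * y) - g x) := by
      have : ξ2 * g x = ∫ y, (K' y) ^ 2 * g x := by
        rw [hξ2, ← integral_mul_const]
      rw [this, ← integral_sub hI1 hI2]
      congr 1; funext y
      ring
    have habs : |∫ y, (K' y) ^ 2 * (g (x - c * y) - g x)| ≤ c * (Cg' * M) := by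
      have hb : ∀ y : ℝ, |(K' y) ^ 2 * (g (x - c * y) - g x)|
          ≤ (Cg' * c) * (|y| * (K' y) ^ 2) := by
        intro y
        rw [abs_mul, abs_of_nonneg (by positivity : (0:ℝ) ≤ (K' y)^2)]
        have h1 : |g (x - c * y) - g x| ≤ Cg' * (c * |y|) := by
          have := hgLip (x - c * y) x
          have he : |x - c * y - x| = c * |y| := by
            rw [show x - c * y - x = -(c * y) by ring, abs_neg, abs_mul,
              abs_of_pos hhn]
          rw [he] at this; linarith
        calc (K' y) ^ 2 * |g (x - c * y) - g x| ≤ (K' y) ^ 2 * (Cg' * (c * |y|)) :=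
              mul_le_mul_of_nonneg_left h1 (by positivity)
          _ = (Cg' * c) * (|y| * (K' y) ^ 2) := by ring
      calc |∫ y, (K' y) ^ 2 * (g (x - c * y) - g x)|
          ≤ ∫ y, |(K' y) ^ 2 * (g (x - c * y) - g x)| := by
            exact
              norm_integral_le_integral_norm (fun y : ℝ => (K' y) ^ 2 * (g (x - c * y) - g x))
        _ ≤ ∫ y, (Cg' * c) * (|y| * (K' y) ^ 2) := by
            have hI3 : Integrable (fun y : ℝ => |(K' y) ^ 2 * (g (x - c * y) - g x)|) := by
              refine ((hI1.sub hI2).abs).congr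
                (Filter.Eventually.of_forall fun y => ?_)
              simp only [Pi.sub_apply]
              congr 1; ring
            exact integral_mono hI3 (hint2.const_mul _) hb
        _ = (Cg' * c) * M := by rw [integral_const_mul, hM]
        _ = c * (Cg' * M) := by ring
    have hkey := key n hn x
    rw [hkey]
    have hrw : (1 / c ^ 3) * (∫ y, (K' y) ^ 2 * g (x - c * y)) - ξ2 * g x / c ^ 3
        = (1 / c ^ 3) * ((∫ y, (K' y) ^ 2 * g (x - c * y)) - ξ2 * g x) := by ring
    rw [hrw, hsub, abs_mul, abs_of_nonneg (by positivity : (0:ℝ) ≤ 1 / c ^ 3)]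
    calc (1 / c ^ 3) * |∫ y, (K' y) ^ 2 * (g (x - c * y) - g x)|
        ≤ (1 / c ^ 3) * (c * (Cg' * M)) := by
          exact mul_le_mul_of_nonneg_left habs (by positivity)
      _ = (Cg' * M) / c ^ 2 := by field_simp
  constructor
  · refine ⟨Cg' * M + 1, by positivity, fun n hn x => ?_⟩
    refine (hDelta n hn x).trans ?_
    have hn0 : (0:ℝ) < (n:ℝ) := by exact_mod_cast hn
    have hhn : 0 < h n := by rw [hband]; exact Real.rpow_pos_of_pos hn0 _
    gcongr
    linarith
  · intro x
    have hp : 0 < 3 * α := by linarith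
    -- rpow bookkeeping
    have hpow3 : ∀ k : ℕ, 1 ≤ k → ξ2 * g x / h k ^ 3 = (ξ2 * g x) * (k:ℝ) ^ (3*α) := by
      intro k hk
      have hk0 : (0:ℝ) < (k:ℝ) := by exact_mod_cast hk
      rw [hband, ← Real.rpow_natCast ((k:ℝ) ^ (-α)) 3, ← Real.rpow_mul hk0.le]
      push_cast
      rw [show -α * 3 = -(3*α) by ring, Real.rpow_neg hk0.le, div_eq_mul_inv, inv_inv]
    have hpow2 : ∀ k : ℕ, 1 ≤ k → (Cg' * M) / h k ^ 2 = (Cg' * M) * (k:ℝ) ^ (2*α) := by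
      intro k hk
      have hk0 : (0:ℝ) < (k:ℝ) := by exact_mod_cast hk
      rw [hband, ← Real.rpow_natCast ((k:ℝ) ^ (-α)) 2, ← Real.rpow_mul hk0.le]
      push_cast
      rw [show -α * 2 = -(2*α) by ring, Real.rpow_neg hk0.le, div_eq_mul_inv, inv_inv]
    -- integrability of v^2
    have hv_int : ∀ k : ℕ, 1 ≤ k → Integrable (fun ω => (v k x ω) ^ 2) ℙ := by
      intro k hk
      have hk0 : (0:ℝ) < (k:ℝ) := by exact_mod_cast hk
      have hhk : 0 < h k := by rw [hband]; exact Real.rpow_pos_of_pos hk0 _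
      have hmeas : Measurable fun ω => (v k x ω) ^ 2 := by
        have he : (fun ω => (v k x ω) ^ 2)
            = fun ω => ((1 / h k ^ 2) * K' ((x - X k ω) / h k)) ^ 2 :=
          funext fun ω => by rw [hv]
        rw [he]
        exact ((measurable_const.mul
          (hK'meas.comp ((measurable_const.sub (hXmeas k)).div_const _))).pow_const 2)
      refine (integrable_const ((CK / h k ^ 2) ^ 2)).mono' hmeas.aestronglyMeasurable
        (Filter.Eventually.of_forall fun ω => ?_)
      rw [hv, Real.norm_eq_abs, abs_of_nonneg (by positivity)]
      have h1 : |(1 / h k ^ 2) * K' ((x - X k ω) / h k)| ≤ CK / h k ^ 2 := by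
        rw [abs_mul, abs_of_nonneg (by positivity : (0:ℝ) ≤ 1 / h k ^ 2)]
        calc (1 / h k ^ 2) * |K' ((x - X k ω) / h k)| ≤ (1 / h k ^ 2) * CK :=
              mul_le_mul_of_nonneg_left (hCK _) (by positivity)
          _ = CK / h k ^ 2 := by ring
      calc ((1 / h k ^ 2) * K' ((x - X k ω) / h k)) ^ 2
          = |(1 / h k ^ 2) * K' ((x - X k ω) / h k)| ^ 2 := (sq_abs _).symm
        _ ≤ (CK / h k ^ 2) ^ 2 := by
            exact pow_le_pow_left₀ (abs_nonneg _) h1 2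
    have hEW : ∀ n : ℕ, ∫ ω, W n x ω ∂ℙ = ∑ k ∈ Finset.Icc 1 n, ∫ ω, (v k x ω) ^ 2 ∂ℙ := by
      intro n
      calc ∫ ω, W n x ω ∂ℙ = ∫ ω, ∑ k ∈ Finset.Icc 1 n, (v k x ω) ^ 2 ∂ℙ :=
            integral_congr_ae (Filter.Eventually.of_forall fun ω => hW n x ω)
        _ = ∑ k ∈ Finset.Icc 1 n, ∫ ω, (v k x ω) ^ 2 ∂ℙ :=
            integral_finset_sum _ fun k hk => hv_int k (Finset.mem_Icc.1 hk).1
    -- distance to the main term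
    have hdiff : ∀ n : ℕ, 1 ≤ n →
        |(∫ ω, W n x ω ∂ℙ) - (ξ2 * g x) * ∑ k ∈ Finset.Icc 1 n, (k:ℝ) ^ (3*α)|
          ≤ (Cg' * M) * ((n:ℝ) * (n:ℝ) ^ (2*α)) := by
      intro n hn
      have hn0 : (0:ℝ) < (n:ℝ) := by exact_mod_cast hn
      rw [hEW, Finset.mul_sum, ← Finset.sum_sub_distrib]
      refine (Finset.abs_sum_le_sum_abs _ _).trans ?_
      have hterm : ∀ k ∈ Finset.Icc 1 n,
          |(∫ ω, (v k x ω) ^ 2 ∂ℙ) - (ξ2 * g x) * (k:ℝ) ^ (3*α)|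
            ≤ (Cg' * M) * (n:ℝ) ^ (2*α) := by
        intro k hk
        obtain ⟨hk1, hk2⟩ := Finset.mem_Icc.1 hk
        have hk0 : (0:ℝ) < (k:ℝ) := by exact_mod_cast hk1
        have := hDelta k hk1 x
        rw [hpow3 k hk1, hpow2 k hk1] at this
        refine this.trans ?_
        have hkn : (k:ℝ) ^ (2*α) ≤ (n:ℝ) ^ (2*α) :=
          Real.rpow_le_rpow hk0.le (by exact_mod_cast hk2) (by linarith)
        exact mul_le_mul_of_nonneg_left hkn (by positivity)
      calc (∑ k ∈ Finset.Icc 1 n, |(∫ ω, (v k x ω) ^ 2 ∂ℙ) - (ξ2 * g x) * (k:ℝ) ^ (3*α)|)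
          ≤ ∑ _k ∈ Finset.Icc 1 n, (Cg' * M) * (n:ℝ) ^ (2*α) := Finset.sum_le_sum hterm
        _ = ((Finset.Icc 1 n).card : ℝ) * ((Cg' * M) * (n:ℝ) ^ (2*α)) := by
            rw [Finset.sum_const, nsmul_eq_mul]
        _ ≤ (Cg' * M) * ((n:ℝ) * (n:ℝ) ^ (2*α)) := by
            have hcard : ((Finset.Icc 1 n).card : ℝ) ≤ (n:ℝ) := by
              rw [Nat.card_Icc]; push_cast; simp
            calc ((Finset.Icc 1 n).card : ℝ) * ((Cg' * M) * (n:ℝ) ^ (2*α))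
                ≤ (n:ℝ) * ((Cg' * M) * (n:ℝ) ^ (2*α)) := by
                  exact mul_le_mul_of_nonneg_right hcard (by positivity)
              _ = (Cg' * M) * ((n:ℝ) * (n:ℝ) ^ (2*α)) := by ring
    -- assemble the limit
    have hmain : Tendsto (fun n : ℕ =>
        (ξ2 * g x) * ((∑ k ∈ Finset.Icc 1 n, (k:ℝ) ^ (3*α)) / (n:ℝ) ^ (1 + 3*α)))
        atTop (𝓝 (ξ2 * g x / (1 + 3 * α))) := by
      have := (aux_sum_rpow (3*α) hp).const_mul (ξ2 * g x)
      rwa [mul_one_div] at this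
    have hrem : Tendsto (fun n : ℕ =>
        ((∫ ω, W n x ω ∂ℙ) - (ξ2 * g x) * ∑ k ∈ Finset.Icc 1 n, (k:ℝ) ^ (3*α))
          / (n:ℝ) ^ (1 + 3*α)) atTop (𝓝 0) := by
      have hb : Tendsto (fun n : ℕ => (Cg' * M) * (n:ℝ) ^ (-α)) atTop (𝓝 0) := by
        have h1 : Tendsto (fun n : ℕ => ((n:ℝ)) ^ (-α)) atTop (𝓝 0) :=
          (tendsto_rpow_neg_atTop hα0).comp tendsto_natCast_atTop_atTop
        simpa using h1.const_mul (Cg' * M)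
      refine squeeze_zero_norm' ?_ hb
      filter_upwards [eventually_ge_atTop 1] with n hn
      have hn0 : (0:ℝ) < (n:ℝ) := by exact_mod_cast hn
      have hq : (0:ℝ) < (n:ℝ) ^ (1 + 3*α) := Real.rpow_pos_of_pos hn0 _
      rw [Real.norm_eq_abs, abs_div, abs_of_pos hq, div_le_iff₀ hq]
      refine (hdiff n hn).trans (le_of_eq ?_)
      have e1 : (n:ℝ) * (n:ℝ) ^ (2*α) = (n:ℝ) ^ (1 + 2*α) := by
        rw [Real.rpow_add hn0, Real.rpow_one]
      have e2 : (n:ℝ) ^ (-α) * (n:ℝ) ^ (1 + 3*α) = (n:ℝ) ^ (1 + 2*α) := by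
        rw [← Real.rpow_add hn0]; congr 1; ring
      rw [e1, show (Cg' * M) * (n:ℝ) ^ (-α) * (n:ℝ) ^ (1 + 3*α)
          = (Cg' * M) * ((n:ℝ) ^ (-α) * (n:ℝ) ^ (1 + 3*α)) from by ring, e2]
    have heq : (fun n : ℕ => (∫ ω, W n x ω ∂ℙ) / (n:ℝ) ^ (1 + 3*α))
        = fun n : ℕ =>
          (ξ2 * g x) * ((∑ k ∈ Finset.Icc 1 n, (k:ℝ) ^ (3*α)) / (n:ℝ) ^ (1 + 3*α))
          + ((∫ ω, W n x ω ∂ℙ) - (ξ2 * g x) * ∑ k ∈ Finset.Icc 1 n, (k:ℝ) ^ (3*α))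
            / (n:ℝ) ^ (1 + 3*α) := by
      funext n; ring
    rw [heq]
    simpa using hmain.add hrem
end

section
/- Uniform deterministic bias bound: let f : ℝ → ℝ be bounded, twice differentiable with bounded second derivative, and let K be differentiable with bounded derivative K′ satisfying ∫K′(y)dy = 0, ∫yK′(y)dy = −1, and τ² = (1/2)∫y²|K′(y)|dy < ∞. Then for every h > 0 and every x ∈ ℝ, |(1/h)∫_ℝ f(x−hy)K′(y)dy − f′(x)| ≤ M_f τ² h, where M_f = sup_{x∈ℝ}|f″(x)|. -/
open MeasureTheory intervalIntegral in
lemma taylor2 (f f' f'' : ℝ → ℝ) (hf : ∀ t, HasDerivAt f (f' t) t)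
    (hf' : ∀ t, HasDerivAt f' (f'' t) t) (M : ℝ) (hM : ∀ t, |f'' t| ≤ M)
    (a b : ℝ) : |f b - f a - (b - a) * f' a| ≤ M / 2 * (b - a) ^ 2 := by
  have hM0 : 0 ≤ M := le_trans (abs_nonneg _) (hM 0)
  have hf'cont : Continuous f' := by
    rw [continuous_iff_continuousAt]; exact fun t => (hf' t).continuousAt
  have hint : ∀ u v : ℝ, IntervalIntegrable f' volume u v :=
    fun u v => hf'cont.intervalIntegrable u v
  have lip : ∀ s t : ℝ, |f' s - f' t| ≤ M * |s - t| := by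
    intro s t
    have := Convex.norm_image_sub_le_of_norm_hasDerivWithin_le
      (f := f') (f' := f'') (C := M) (s := Set.univ)
      (fun u _ => (hf' u).hasDerivWithinAt) (fun u _ => by simpa using hM u)
      convex_univ (Set.mem_univ t) (Set.mem_univ s)
    simpa [Real.norm_eq_abs] using this
  have key : ∀ u v : ℝ, f v - f u - (v - u) * f' u = ∫ t in u..v, (f' t - f' u) := by
    intro u v
    rw [intervalIntegral.integral_sub (hint u v) (intervalIntegrable_const),
      intervalIntegral.integral_eq_sub_of_hasDerivAt (fun t _ => hf t) (hint u v),
      intervalIntegral.integral_const]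
    simp [smul_eq_mul]
  rcases le_total a b with hab | hab
  · rw [key a b]
    have hb : IntervalIntegrable (fun t => M * (t - a)) volume a b :=
      Continuous.intervalIntegrable (by continuity) a b
    have hbd : ∀ᵐ t ∂(volume.restrict (Set.uIoc a b)), ‖f' t - f' a‖ ≤ M * (t - a) := by
      filter_upwards [ae_restrict_mem measurableSet_uIoc] with t ht
      rw [Set.uIoc_of_le hab] at ht
      have h1 : |t - a| = t - a := abs_of_pos (sub_pos.2 ht.1)
      calc ‖f' t - f' a‖ = |f' t - f' a| := Real.norm_eq_abs _
        _ ≤ M * |t - a| := lip t a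
        _ = M * (t - a) := by rw [h1]
    have hval : (∫ t in a..b, M * (t - a)) = M / 2 * (b - a) ^ 2 := by
      rw [intervalIntegral.integral_const_mul,
        intervalIntegral.integral_sub intervalIntegral.intervalIntegrable_id
          intervalIntegrable_const,
        integral_id, intervalIntegral.integral_const]
      simp [smul_eq_mul]; ring
    have := intervalIntegral.norm_integral_le_abs_of_norm_le hbd hb
    rw [hval, abs_of_nonneg (by positivity)] at this
    simpa [Real.norm_eq_abs] using this
  · rw [key a b, intervalIntegral.integral_symm, abs_neg]
    have hb : IntervalIntegrable (fun t => M * (a - t)) volume b a :=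
      Continuous.intervalIntegrable (by continuity) b a
    have hbd : ∀ᵐ t ∂(volume.restrict (Set.uIoc b a)), ‖f' t - f' a‖ ≤ M * (a - t) := by
      filter_upwards [ae_restrict_mem measurableSet_uIoc] with t ht
      rw [Set.uIoc_of_le hab] at ht
      have h1 : |t - a| = a - t := by rw [abs_sub_comm]; exact abs_of_nonneg (sub_nonneg.2 ht.2)
      calc ‖f' t - f' a‖ = |f' t - f' a| := Real.norm_eq_abs _
        _ ≤ M * |t - a| := lip t a
        _ = M * (a - t) := by rw [h1]
    have hval : (∫ t in b..a, M * (a - t)) = M / 2 * (b - a) ^ 2 := by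
      rw [intervalIntegral.integral_const_mul,
        intervalIntegral.integral_sub intervalIntegrable_const
          intervalIntegral.intervalIntegrable_id,
        integral_id, intervalIntegral.integral_const]
      simp [smul_eq_mul]; ring
    have := intervalIntegral.norm_integral_le_abs_of_norm_le hbd hb
    rw [hval, abs_of_nonneg (by positivity)] at this
    simpa [Real.norm_eq_abs] using this

open MeasureTheory ProbabilityTheory Filter Real Finset
open scoped ENNReal NNReal Topology
theorem stmt_13
    (f f' f'' K K' : ℝ → ℝ)
    (hf : ∀ t, HasDerivAt f (f' t) t) (hf' : ∀ t, HasDerivAt f' (f'' t) t)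
    (hfbdd : ∃ C, ∀ t, |f t| ≤ C)
    (hf''bdd : ∃ C, ∀ t, |f'' t| ≤ C)
    (hKderiv : ∀ t, HasDerivAt K (K' t) t)
    (hK'bdd : ∃ C, ∀ t, |K' t| ≤ C)
    (hK'int : ∫ y, K' y = 0)
    (hK'mom1 : ∫ y, y * K' y = -1)
    (hK'mom2 : Integrable (fun y => y ^ 2 * |K' y|))
    (Mf τ2 : ℝ) (hMf : Mf = ⨆ t, |f'' t|)
    (hτ2 : τ2 = (1 / 2) * ∫ y, y ^ 2 * |K' y|) :
    ∀ h : ℝ, 0 < h → ∀ x : ℝ,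
      |(1 / h) * (∫ y, f (x - h * y) * K' y) - f' x| ≤ Mf * τ2 * h := by
  obtain ⟨CK, hCK⟩ := hK'bdd
  have hCK0 : 0 ≤ CK := le_trans (abs_nonneg _) (hCK 0)
  have hK'eq : K' = deriv K := funext fun t => ((hKderiv t).deriv).symm
  have hK'meas : Measurable K' := hK'eq ▸ measurable_deriv K
  have hyK' : Integrable (fun y => y * K' y) := by
    by_contra hc
    rw [integral_undef hc] at hK'mom1; norm_num at hK'mom1
  have hK'integ : Integrable K' := by
    refine Integrable.mono'
      (g := fun y => |y * K' y| + Set.indicator (Set.Icc (-1:ℝ) 1) (fun _ => CK) y)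
      (hyK'.abs.add ((integrable_indicator_iff measurableSet_Icc).2
        (integrableOn_const measure_Icc_lt_top.ne)))
      hK'meas.aestronglyMeasurable (Filter.Eventually.of_forall ?_)
    intro y
    rw [Real.norm_eq_abs]
    show |K' y| ≤ |y * K' y| + (Set.Icc (-1:ℝ) 1).indicator (fun _ => CK) y
    rcases le_or_gt |y| 1 with hy | hy
    · have hmem : y ∈ Set.Icc (-1:ℝ) 1 := by
        rcases abs_le.1 hy with ⟨h1, h2⟩; exact ⟨h1, h2⟩
      rw [Set.indicator_of_mem hmem]
      have := hCK y
      have : |K' y| ≤ CK := hCK y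
      nlinarith [abs_nonneg (y * K' y)]
    · have h1 : |K' y| ≤ |y * K' y| := by
        rw [abs_mul]
        nlinarith [abs_nonneg (K' y)]
      have h2 : 0 ≤ Set.indicator (Set.Icc (-1:ℝ) 1) (fun _ => CK) y :=
        Set.indicator_nonneg (fun _ _ => hCK0) y
      linarith
  have hMfb : ∀ t, |f'' t| ≤ Mf := by
    intro t
    obtain ⟨C2, hC2⟩ := hf''bdd
    rw [hMf]
    exact le_ciSup ⟨C2, fun v ⟨u, hu⟩ => hu ▸ hC2 u⟩ t
  have hfc : Continuous f := by
    rw [continuous_iff_continuousAt]; exact fun t => (hf t).continuousAt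
  intro h hh x
  set R : ℝ → ℝ := fun y => f (x - h * y) - f x + h * y * f' x with hRdef
  have hRbd : ∀ y, |R y| ≤ Mf / 2 * (h * y) ^ 2 := by
    intro y
    have := taylor2 f f' f'' hf hf' Mf hMfb x (x - h * y)
    have e1 : x - h * y - x = -(h * y) := by ring
    rw [e1] at this
    have e2 : f (x - h * y) - f x - -(h * y) * f' x = R y := by rw [hRdef]; ring
    rw [e2] at this
    simpa [neg_sq] using this
  have hRc : Continuous R := by
    apply Continuous.add
    · exact (hfc.comp (by continuity)).sub continuous_const
    · continuity
  have I1 : Integrable (fun y => f x * K' y) := hK'integ.const_mul _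
  have I2 : Integrable (fun y => (-h * f' x) * (y * K' y)) := hyK'.const_mul _
  have I3 : Integrable (fun y => R y * K' y) := by
    refine Integrable.mono' (g := fun y => (Mf / 2 * h ^ 2) * (y ^ 2 * |K' y|))
      (hK'mom2.const_mul _)
      (hRc.aestronglyMeasurable.mul hK'meas.aestronglyMeasurable)
      (Filter.Eventually.of_forall fun y => ?_)
    rw [Real.norm_eq_abs, abs_mul]
    calc |R y| * |K' y| ≤ (Mf / 2 * (h * y) ^ 2) * |K' y| :=
          mul_le_mul_of_nonneg_right (hRbd y) (abs_nonneg _)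
      _ = (Mf / 2 * h ^ 2) * (y ^ 2 * |K' y|) := by ring
  have hsplit : (fun y => f (x - h * y) * K' y)
      = fun y => (f x * K' y + (-h * f' x) * (y * K' y)) + R y * K' y := by
    funext y; rw [hRdef]; ring
  have I12 : Integrable (fun y => f x * K' y + (-h * f' x) * (y * K' y)) :=
    I1.add I2
  have hIg : (∫ y, f (x - h * y) * K' y) = h * f' x + ∫ y, R y * K' y := by
    rw [hsplit, integral_add I12 I3, integral_add I1 I2,
      MeasureTheory.integral_const_mul, MeasureTheory.integral_const_mul, hK'int, hK'mom1]
    ring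
  rw [hIg]
  have e3 : (1 / h) * (h * f' x + ∫ y, R y * K' y) - f' x
      = (1 / h) * ∫ y, R y * K' y := by
    field_simp
    ring
  rw [e3, abs_mul, abs_of_pos (by positivity : (0:ℝ) < 1 / h)]
  have hb1 : |∫ y, R y * K' y| ≤ Mf / 2 * h ^ 2 * ∫ y, y ^ 2 * |K' y| := by
    calc |∫ y, R y * K' y| ≤ ∫ y, |R y * K' y| := by
            have := norm_integral_le_integral_norm (μ := volume) (fun y => R y * K' y)
            simpa only [Real.norm_eq_abs] using this
      _ ≤ ∫ y, (Mf / 2 * h ^ 2) * (y ^ 2 * |K' y|) := by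
            refine integral_mono I3.abs (hK'mom2.const_mul _) fun y => ?_
            rw [abs_mul]
            calc |R y| * |K' y| ≤ (Mf / 2 * (h * y) ^ 2) * |K' y| :=
                  mul_le_mul_of_nonneg_right (hRbd y) (abs_nonneg _)
              _ = (Mf / 2 * h ^ 2) * (y ^ 2 * |K' y|) := by ring
      _ = Mf / 2 * h ^ 2 * ∫ y, y ^ 2 * |K' y| := MeasureTheory.integral_const_mul _ _
  calc (1 / h) * |∫ y, R y * K' y| ≤ (1 / h) * (Mf / 2 * h ^ 2 * ∫ y, y ^ 2 * |K' y|) :=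
        mul_le_mul_of_nonneg_left hb1 (by positivity)
    _ = Mf * τ2 * h := by rw [hτ2]; field_simp
end

section
/- Negligibility of the bias remainder: with c_k(x) = (f(X_k)/g(X_k))·(1/h_k²)K′((x−X_k)/h_k), C_n(x) = ∑_{k=1}^n c_k(x), and Ř_n(x) = E[C_n(x)] − n f′(x), under assumptions (A1)–(A2) and with (X_k) i.i.d. with density g, if α > 1/5 then sup_{x∈ℝ}|Ř_n(x)| = o(n^{(1+3α)/2}) as n → ∞. -/
open MeasureTheory ProbabilityTheory Filter Real Finset
open scoped ENNReal NNReal Topology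

/-- Second-order Taylor bound. -/
lemma aux_taylor {f f' f'' : ℝ → ℝ} {M : ℝ}
    (hf : ∀ t, HasDerivAt f (f' t) t) (hf' : ∀ t, HasDerivAt f' (f'' t) t)
    (hM : ∀ t, |f'' t| ≤ M) (x y : ℝ) :
    |f y - f x - f' x * (y - x)| ≤ M * (y - x) ^ 2 := by
  have hM0 : 0 ≤ M := le_trans (abs_nonneg _) (hM 0)
  -- f' is M-Lipschitz
  have hlip : ∀ a b : ℝ, |f' a - f' b| ≤ M * |a - b| := by
    intro a b
    have := Convex.norm_image_sub_le_of_norm_hasDerivWithin_le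
      (fun t (_ : t ∈ (Set.univ : Set ℝ)) => (hf' t).hasDerivWithinAt)
      (fun t _ => by simpa [Real.norm_eq_abs] using hM t) convex_univ
      (Set.mem_univ b) (Set.mem_univ a)
    simpa [Real.norm_eq_abs] using this
  set φ : ℝ → ℝ := fun t => f t - f' x * t with hφ
  have hφd : ∀ t, HasDerivAt φ (f' t - f' x) t := by
    intro t
    exact ((hf t).sub ((hasDerivAt_id t).const_mul (f' x))).congr_deriv (by simp)
  have key : |φ y - φ x| ≤ (M * |y - x|) * |y - x| := by
    have bnd : ∀ t ∈ Set.uIcc x y, ‖f' t - f' x‖ ≤ M * |y - x| := by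
      intro t ht
      have h1 : |t - x| ≤ |y - x| := by
        rcases le_total x y with hxy | hxy
        · rw [Set.uIcc_of_le hxy] at ht
          rw [abs_of_nonneg (by linarith [ht.1]), abs_of_nonneg (by linarith)]
          linarith [ht.2]
        · rw [Set.uIcc_of_ge hxy] at ht
          rw [abs_of_nonpos (by linarith [ht.2]), abs_of_nonpos (by linarith)]
          linarith [ht.1]
      calc ‖f' t - f' x‖ = |f' t - f' x| := rfl
        _ ≤ M * |t - x| := hlip t x
        _ ≤ M * |y - x| := by nlinarith [abs_nonneg (t - x)]
    have := Convex.norm_image_sub_le_of_norm_hasDerivWithin_le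
      (fun t (ht : t ∈ Set.uIcc x y) => (hφd t).hasDerivWithinAt)
      bnd (convex_uIcc x y)
      Set.left_mem_uIcc Set.right_mem_uIcc
    simpa [Real.norm_eq_abs] using this
  have heq : φ y - φ x = f y - f x - f' x * (y - x) := by simp [hφ]; ring
  calc |f y - f x - f' x * (y - x)| = |φ y - φ x| := by rw [heq]
    _ ≤ (M * |y - x|) * |y - x| := key
    _ = M * (y - x) ^ 2 := by rw [mul_assoc, ← abs_mul, abs_mul_self]; ring

/-- Change of variables: kernel smoothing integral. -/
lemma aux_cov (G : ℝ → ℝ) {h : ℝ} (hh : 0 < h) (x : ℝ) :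
    ∫ t, G ((x - t) / h) = h * ∫ u, G u := by
  have e1 : (fun t : ℝ => G ((x - t) / h)) = fun t => (fun s => G (h⁻¹ * -s)) (t - x) := by
    funext t
    rw [div_eq_inv_mul]
    ring_nf
  rw [e1, integral_sub_right_eq_self (fun s => G (h⁻¹ * -s)) x]
  have e2 : (fun s : ℝ => G (h⁻¹ * -s)) = fun s => (fun u => G (h⁻¹ * u)) (-s) := rfl
  rw [e2, integral_neg_eq_self (fun u => G (h⁻¹ * u)) volume,
    MeasureTheory.Measure.integral_comp_inv_mul_left G h]
  simp [abs_of_pos hh, smul_eq_mul]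

/-- Main kernel expectation bound. -/
lemma aux_kernel {f f' f'' K' : ℝ → ℝ} {Mf Cf M2 : ℝ}
    (hf : ∀ t, HasDerivAt f (f' t) t) (hf' : ∀ t, HasDerivAt f' (f'' t) t)
    (hMf : ∀ t, |f'' t| ≤ Mf)
    (hCf : ∀ t, |f t| ≤ Cf)
    (hK'i : Integrable K')
    (hK'i1 : Integrable (fun t => t * K' t))
    (hK'i2 : Integrable (fun t => t ^ 2 * |K' t|))
    (hK'int : ∫ t, K' t = 0)
    (hK'mom1 : ∫ t, t * K' t = -1)
    (hM2 : ∫ t, t ^ 2 * |K' t| = M2)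
    {h : ℝ} (hh : 0 < h) (x : ℝ) :
    |(1 / h ^ 2) * (∫ t, f t * K' ((x - t) / h)) - f' x| ≤ Mf * M2 * h := by
  have hfc : Continuous f := by
    rw [continuous_iff_continuousAt]; exact fun t => (hf t).continuousAt
  set G : ℝ → ℝ := fun u => f (x - h * u) * K' u with hG
  have e1 : (fun t => f t * K' ((x - t) / h)) = fun t => G ((x - t) / h) := by
    funext t
    simp only [hG]
    rw [mul_div_cancel₀ _ hh.ne']
    ring_nf
  have hGint : Integrable G := by
    apply hK'i.bdd_mul ((hfc.comp (by fun_prop)).aestronglyMeasurable)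
    exact ae_of_all _ (fun u => by simpa [Real.norm_eq_abs] using hCf (x - h * u))
  set R : ℝ → ℝ := fun u => f (x - h * u) - f x + f' x * (h * u) with hR
  have hGeq : ∀ u, G u = f x * K' u + (-(f' x * h)) * (u * K' u) + R u * K' u := by
    intro u; simp only [hG, hR]; ring
  have IntA : Integrable (fun u => f x * K' u) := hK'i.const_mul _
  have IntB : Integrable (fun u => (-(f' x * h)) * (u * K' u)) := hK'i1.const_mul _
  have IntR : Integrable (fun u => R u * K' u) := by
    have : (fun u => R u * K' u)
        = fun u => G u - f x * K' u - (-(f' x * h)) * (u * K' u) := by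
      funext u; rw [hGeq u]; ring
    rw [this]
    exact (hGint.sub IntA).sub IntB
  have hsplit : ∫ u, G u = (f x * ∫ u, K' u) + (-(f' x * h)) * (∫ u, u * K' u)
      + ∫ u, R u * K' u := by
    have e : ∫ u, G u
        = ∫ u, (f x * K' u + (-(f' x * h)) * (u * K' u) + R u * K' u) := by
      congr 1; funext u; exact hGeq u
    have IntAB : Integrable (fun u => f x * K' u + (-(f' x * h)) * (u * K' u)) :=
      IntA.add IntB
    rw [e, integral_add IntAB IntR, integral_add IntA IntB,
      MeasureTheory.integral_const_mul, MeasureTheory.integral_const_mul]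
  have hRbound : ∀ u, |R u| * |K' u| ≤ Mf * h ^ 2 * (u ^ 2 * |K' u|) := by
    intro u
    have := aux_taylor hf hf' hMf x (x - h * u)
    have h2 : (x - h * u - x) ^ 2 = h ^ 2 * u ^ 2 := by ring
    have hRle : |R u| ≤ Mf * (h ^ 2 * u ^ 2) := by
      have : R u = f (x - h * u) - f x - f' x * ((x - h * u) - x) := by
        simp only [hR]; ring
      rw [this]
      calc |f (x - h * u) - f x - f' x * (x - h * u - x)|
          ≤ Mf * (x - h * u - x) ^ 2 := aux_taylor hf hf' hMf x (x - h * u)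
        _ = Mf * (h ^ 2 * u ^ 2) := by rw [h2]
    calc |R u| * |K' u|
        ≤ (Mf * (h ^ 2 * u ^ 2)) * |K' u| := by
          exact mul_le_mul_of_nonneg_right hRle (abs_nonneg _)
      _ = Mf * h ^ 2 * (u ^ 2 * |K' u|) := by ring
  have IntRabs : Integrable (fun u => |R u| * |K' u|) := by
    simpa [abs_mul] using IntR.abs
  have hE : |∫ u, R u * K' u| ≤ Mf * h ^ 2 * M2 := by
    calc |∫ u, R u * K' u| ≤ ∫ u, |R u| * |K' u| := by
          simpa [Real.norm_eq_abs, abs_mul] using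
            norm_integral_le_integral_norm (μ := volume) (fun u => R u * K' u)
      _ ≤ ∫ u, Mf * h ^ 2 * (u ^ 2 * |K' u|) :=
          integral_mono IntRabs (hK'i2.const_mul _) hRbound
      _ = Mf * h ^ 2 * M2 := by rw [MeasureTheory.integral_const_mul, hM2]
  have hI : ∫ t, f t * K' ((x - t) / h) = h * (f' x * h + ∫ u, R u * K' u) := by
    rw [e1, aux_cov G hh x, hsplit, hK'int, hK'mom1]
    ring
  rw [hI]
  have hh2 : h ^ 2 ≠ 0 := by positivity
  have : (1 / h ^ 2) * (h * (f' x * h + ∫ u, R u * K' u)) - f' x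
      = (∫ u, R u * K' u) / h := by field_simp; ring
  rw [this, abs_div, abs_of_pos hh, div_le_iff₀ hh]
  calc |∫ u, R u * K' u| ≤ Mf * h ^ 2 * M2 := hE
    _ = Mf * M2 * h * h := by ring

/-- Integrability from a bound near the origin and domination away from it. -/
lemma aux_int_of_far {ψ ρ : ℝ → ℝ} (hmeas : AEStronglyMeasurable ψ volume)
    {Cb : ℝ} (hnear : ∀ t, |t| ≤ 1 → |ψ t| ≤ Cb)
    (hρ : Integrable ρ)
    (hfar : ∀ t : ℝ, 1 ≤ |t| → |ψ t| ≤ ρ t) (hρ0 : ∀ t, 0 ≤ ρ t) :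
    Integrable ψ := by
  have hCb0 : 0 ≤ Cb := le_trans (abs_nonneg _) (hnear 0 (by norm_num))
  have hind : Integrable ((Set.Icc (-1:ℝ) 1).indicator (fun _ => Cb)) := by
    apply (integrableOn_const (hs := ?_)).integrable_indicator measurableSet_Icc
    exact measure_Icc_lt_top.ne
  apply Integrable.mono' (hind.add hρ) hmeas
  filter_upwards with t
  rcases le_or_gt |t| 1 with ht | ht
  · have htmem : t ∈ Set.Icc (-1:ℝ) 1 := by
      rw [Set.mem_Icc]; constructor <;> [linarith [abs_le.1 ht]; linarith [abs_le.1 ht]]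
    simp only [Real.norm_eq_abs, Pi.add_apply, Set.indicator_of_mem htmem]
    have := hρ0 t
    linarith [hnear t ht]
  · have htmem : t ∉ Set.Icc (-1:ℝ) 1 := by
      rw [Set.mem_Icc]; intro ⟨h1, h2⟩
      rcases abs_cases t with ⟨he, _⟩ | ⟨he, _⟩ <;> linarith
    simp only [Real.norm_eq_abs, Pi.add_apply, Set.indicator_of_notMem htmem]
    linarith [hfar t ht.le]

/-- Comparison of the partial sums of `k ^ (-α)` with `n ^ (1 - α)`. -/
lemma aux_sum_rpow_s15 {α : ℝ} (h0 : 0 < α) (h1 : α < 1) (n : ℕ) (hn : 1 ≤ n) :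
    ∑ k ∈ Finset.Icc 1 n, (k : ℝ) ^ (-α) ≤ (1 + (1 - α)⁻¹) * (n : ℝ) ^ (1 - α) := by
  have h1α : 0 < 1 - α := by linarith
  set F : ℝ → ℝ := fun t => t ^ (-α) with hF
  have hone : (1:ℝ) ≤ (n : ℝ) ^ (1 - α) :=
    Real.one_le_rpow (by exact_mod_cast hn) h1α.le
  obtain ⟨m, rfl⟩ : ∃ m, n = m + 1 := ⟨n - 1, (Nat.succ_pred_eq_of_pos hn).symm⟩
  have hanti : AntitoneOn F (Set.Icc (1:ℝ) (1 + (m : ℕ))) := by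
    intro a ha b hb hab
    exact Real.rpow_le_rpow_of_nonpos (lt_of_lt_of_le one_pos ha.1) hab (by linarith)
  have key := hanti.sum_le_integral
  have hint : ∫ x in (1:ℝ)..(1 + (m:ℕ)), F x
      ≤ ((m + 1 : ℕ) : ℝ) ^ (1 - α) / (1 - α) := by
    have e : ∫ x in (1:ℝ)..(1 + (m:ℕ)), F x
        = (((1:ℝ) + (m:ℕ)) ^ (-α + 1) - (1:ℝ) ^ (-α + 1)) / (-α + 1) :=
      integral_rpow (Or.inl (by linarith))
    have hcast : ((1:ℝ) + (m:ℕ)) = ((m + 1 : ℕ) : ℝ) := by push_cast; ring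
    have he : (-α + 1) = 1 - α := by ring
    calc (∫ x in (1:ℝ)..(1 + (m:ℕ)), F x)
        = (((m + 1:ℕ):ℝ) ^ (1 - α) - 1) / (1 - α) := by
          rw [e, hcast, he, Real.one_rpow]
      _ ≤ ((m + 1:ℕ):ℝ) ^ (1 - α) / (1 - α) := by gcongr; linarith
  have hdecomp : ∑ k ∈ Finset.Icc 1 (m + 1), F (k:ℝ)
      = (∑ i ∈ Finset.range m, F (1 + ((i + 1 : ℕ) : ℝ))) + F 1 := by
    rw [← Finset.Ico_add_one_right_eq_Icc, Finset.sum_Ico_eq_sum_range]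
    have : m + 1 + 1 - 1 = m + 1 := rfl
    rw [this, Finset.sum_range_succ']
    congr 1
    · apply Finset.sum_congr rfl; intro i _
      congr 1; push_cast; ring
    · congr 1; push_cast; ring
  have hF1 : F 1 = 1 := Real.one_rpow (-α)
  calc ∑ k ∈ Finset.Icc 1 (m + 1), (k : ℝ) ^ (-α)
      = (∑ i ∈ Finset.range m, F (1 + ((i + 1 : ℕ) : ℝ))) + F 1 := hdecomp
    _ ≤ ((m + 1 : ℕ):ℝ) ^ (1 - α) / (1 - α) + 1 := by
        rw [hF1]; exact add_le_add (key.trans hint) le_rfl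
    _ ≤ (1 + (1 - α)⁻¹) * ((m + 1 : ℕ) : ℝ) ^ (1 - α) := by
        rw [div_eq_inv_mul]
        push_cast at hone ⊢
        nlinarith [inv_nonneg.2 h1α.le]

theorem stmt_15
    {Ω : Type*} [MeasureSpace Ω] [IsProbabilityMeasure (ℙ : Measure Ω)]
    (α : ℝ) (hα0 : 0 < α) (hα1 : α < 1)
    (hαlo : 1/5 < α)
    (h : ℕ → ℝ) (hband : ∀ n : ℕ, h n = (n : ℝ) ^ (-α))
    (X : ℕ → Ω → ℝ) (g : ℝ → ℝ)
    (hXmeas : ∀ n, Measurable (X n))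
    (hXindep : iIndepFun X ℙ)
    (hgpos : ∀ t, 0 < g t)
    (hXlaw : ∀ n, Measure.map (X n) ℙ
      = volume.withDensity (fun t => ENNReal.ofReal (g t)))
    (f : ℝ → ℝ)
    (K K' : ℝ → ℝ)
    (hKpos : ∀ t, 0 ≤ K t)
    (hKsymm : ∀ t, K (-t) = K t)
    (hKbdd : ∃ C, ∀ t, K t ≤ C)
    (hKderiv : ∀ t, HasDerivAt K (K' t) t)
    (hK'bdd : ∃ C, ∀ t, |K' t| ≤ C)
    (hKint : ∫ t, K t = 1)
    (hK'int : ∫ t, K' t = 0)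
    (hK'mom1 : ∫ t, t * K' t = -1)
    (hK'mom2 : ∫ t, t ^ 2 * K' t = 0)
    (hKmom4 : Integrable (fun t => t ^ 4 * K t))
    (hK'mom4 : Integrable (fun t => t ^ 4 * |K' t|))
    (f' f'' : ℝ → ℝ)
    (hf : ∀ t, HasDerivAt f (f' t) t) (hf' : ∀ t, HasDerivAt f' (f'' t) t)
    (hfbdd : ∃ C, ∀ t, |f t| ≤ C) (hf'bdd : ∃ C, ∀ t, |f' t| ≤ C)
    (hf''bdd : ∃ C, ∀ t, |f'' t| ≤ C)
    (g' g'' : ℝ → ℝ)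
    (hg : ∀ t, HasDerivAt g (g' t) t) (hg' : ∀ t, HasDerivAt g' (g'' t) t)
    (hgbdd : ∃ C, ∀ t, |g t| ≤ C) (hg'bdd : ∃ C, ∀ t, |g' t| ≤ C)
    (hg''bdd : ∃ C, ∀ t, |g'' t| ≤ C)
    (c : ℕ → ℝ → Ω → ℝ)
    (hc : ∀ n x ω, c n x ω
      = (f (X n ω) / g (X n ω)) * ((1 / h n ^ 2) * K' ((x - X n ω) / h n)))
    (C : ℕ → ℝ → Ω → ℝ)
    (hC : ∀ n x ω, C n x ω = ∑ k ∈ Finset.Icc 1 n, c k x ω)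
    :
    ∀ δ : ℝ, 0 < δ → ∃ N : ℕ, ∀ n : ℕ, N ≤ n → ∀ x : ℝ,
      |(∫ ω, C n x ω ∂ℙ) - (n : ℝ) * f' x| ≤ δ * (n : ℝ) ^ ((1 + 3 * α) / 2) := by
  intro δ hδ
  obtain ⟨Cf, hCf⟩ := hfbdd
  obtain ⟨Mf, hMf⟩ := hf''bdd
  obtain ⟨CK', hCK'⟩ := hK'bdd
  have h1α : 0 < 1 - α := by linarith
  have hfc : Continuous f := continuous_iff_continuousAt.2 fun t => (hf t).continuousAt
  have hgc : Continuous g := continuous_iff_continuousAt.2 fun t => (hg t).continuousAt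
  have hK'meas : Measurable K' := by
    have e : K' = deriv K := funext fun t => ((hKderiv t).deriv).symm
    rw [e]; exact measurable_deriv K
  have hK'i1 : Integrable (fun t => t * K' t) := by
    by_contra hcon
    rw [MeasureTheory.integral_undef hcon] at hK'mom1
    norm_num at hK'mom1
  have hK'i : Integrable K' := by
    apply aux_int_of_far hK'meas.aestronglyMeasurable (fun t _ => hCK' t) hK'i1.abs ?_
      (fun t => abs_nonneg _)
    intro t ht
    calc |K' t| = 1 * |K' t| := (one_mul _).symm
      _ ≤ |t| * |K' t| := mul_le_mul_of_nonneg_right ht (abs_nonneg _)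
      _ = |t * K' t| := (abs_mul t (K' t)).symm
  have hK'i2 : Integrable (fun t => t ^ 2 * |K' t|) := by
    have hmeas2 : Measurable (fun t : ℝ => t ^ 2 * |K' t|) :=
      (measurable_id.pow_const 2).mul hK'meas.abs
    apply aux_int_of_far (Cb := CK') hmeas2.aestronglyMeasurable
      ?_ hK'mom4 ?_ (fun t => by positivity)
    · intro t ht
      have h2 : t ^ 2 ≤ 1 := by nlinarith [abs_le.1 ht]
      have e2 : abs (t ^ 2 * abs (K' t)) = t ^ 2 * |K' t| := abs_of_nonneg (by positivity)
      rw [e2]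
      calc t ^ 2 * |K' t| ≤ 1 * |K' t| := mul_le_mul_of_nonneg_right h2 (abs_nonneg _)
        _ = |K' t| := one_mul _
        _ ≤ CK' := hCK' t
    · intro t ht
      have h2 : (1:ℝ) ≤ t ^ 2 := by nlinarith [abs_nonneg t, sq_abs t]
      have h4 : t ^ 2 ≤ t ^ 4 := by nlinarith
      have e2 : abs (t ^ 2 * abs (K' t)) = t ^ 2 * |K' t| := abs_of_nonneg (by positivity)
      rw [e2]
      exact mul_le_mul_of_nonneg_right h4 (abs_nonneg _)
  set M2 : ℝ := (∫ t, t ^ 2 * |K' t|) with hM2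
  have hM20 : 0 ≤ M2 := integral_nonneg fun t => by positivity
  have hMf0 : 0 ≤ Mf := le_trans (abs_nonneg _) (hMf 0)
  set A : ℝ := Mf * M2 * (1 + (1 - α)⁻¹) with hA
  have hA0 : 0 ≤ A := by
    have := inv_nonneg.2 h1α.le
    apply mul_nonneg (mul_nonneg hMf0 hM20); linarith
  have hexp : 0 < (5 * α - 1) / 2 := by linarith
  have htend : Tendsto (fun n : ℕ => (n : ℝ) ^ ((5 * α - 1) / 2)) atTop atTop :=
    (tendsto_rpow_atTop hexp).comp tendsto_natCast_atTop_atTop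
  obtain ⟨N0, hN0⟩ := Filter.eventually_atTop.1 (Filter.tendsto_atTop.1 htend (A / δ))
  refine ⟨max N0 1, fun n hn x => ?_⟩
  have hn1 : 1 ≤ n := le_trans (le_max_right _ _) hn
  have hnN0 : N0 ≤ n := le_trans (le_max_left _ _) hn
  have hge : A / δ ≤ (n : ℝ) ^ ((5 * α - 1) / 2) := hN0 n hnN0
  have hnpos : (0:ℝ) < (n : ℝ) := by exact_mod_cast hn1
  -- the per-summand analysis
  have main : ∀ k : ℕ, 1 ≤ k →
      Integrable (fun ω => c k x ω) ℙ ∧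
      |(∫ ω, c k x ω ∂ℙ) - f' x| ≤ Mf * M2 * (k : ℝ) ^ (-α) := by
    intro k hk1
    have hhk : 0 < h k := by
      rw [hband]
      exact Real.rpow_pos_of_pos (by exact_mod_cast hk1) _
    set φ : ℝ → ℝ := fun t => (f t / g t) * ((1 / h k ^ 2) * K' ((x - t) / h k)) with hφ
    have φmeas : Measurable φ :=
      (hfc.measurable.div hgc.measurable).mul
        (measurable_const.mul (hK'meas.comp ((measurable_const.sub measurable_id).div_const _)))
    have hcφ : (fun ω => c k x ω) = fun ω => φ (X k ω) := funext fun ω => hc k x ω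
    have hK'comp : Integrable (fun t => K' ((x - t) / h k)) := by
      have h2 : Integrable (fun t : ℝ => K' ((h k)⁻¹ * (x - t))) :=
        (hK'i.comp_mul_left' (inv_ne_zero hhk.ne')).comp_sub_left x
      simpa [div_eq_inv_mul] using h2
    have hreal : Integrable (fun t => f t * ((1 / h k ^ 2) * K' ((x - t) / h k))) :=
      (hK'comp.const_mul (1 / h k ^ 2)).bdd_mul hfc.aestronglyMeasurable
        (ae_of_all _ (fun t => by simpa [Real.norm_eq_abs] using hCf t))
    have htoNN : Measurable fun t => Real.toNNReal (g t) :=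
      measurable_real_toNNReal.comp hgc.measurable
    have hmap : Measure.map (X k) ℙ
        = volume.withDensity fun t => ((Real.toNNReal (g t) : ℝ≥0) : ℝ≥0∞) := by
      rw [hXlaw k]; rfl
    have hgsmul : ∀ t, (Real.toNNReal (g t) : ℝ≥0) • φ t
        = f t * ((1 / h k ^ 2) * K' ((x - t) / h k)) := by
      intro t
      have hgt : g t ≠ 0 := (hgpos t).ne'
      rw [NNReal.smul_def, Real.coe_toNNReal _ (hgpos t).le]
      simp only [hφ]
      field_simp
      have hk0 : h k ≠ 0 := hhk.ne'
      rw [smul_eq_mul]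
      field_simp
    have hIntφ : Integrable φ (Measure.map (X k) ℙ) := by
      rw [hmap, integrable_withDensity_iff_integrable_smul htoNN]
      have e : (fun t => (Real.toNNReal (g t) : ℝ≥0) • φ t)
          = fun t => f t * ((1 / h k ^ 2) * K' ((x - t) / h k)) := funext hgsmul
      rw [e]
      exact hreal
    have hInt : Integrable (fun ω => c k x ω) ℙ := by
      rw [hcφ]
      exact (MeasureTheory.integrable_map_measure φmeas.aestronglyMeasurable
        (hXmeas k).aemeasurable).1 hIntφ
    refine ⟨hInt, ?_⟩
    have hEc : ∫ ω, c k x ω ∂ℙ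
        = (1 / h k ^ 2) * ∫ t, f t * K' ((x - t) / h k) := by
      rw [hcφ, ← MeasureTheory.integral_map (hXmeas k).aemeasurable
        φmeas.aestronglyMeasurable, hmap,
        integral_withDensity_eq_integral_smul htoNN]
      have e : (fun t => (Real.toNNReal (g t) : ℝ≥0) • φ t)
          = fun t => (1 / h k ^ 2) * (f t * K' ((x - t) / h k)) := by
        funext t; rw [hgsmul t]; ring
      rw [e, MeasureTheory.integral_const_mul]
    rw [hEc]
    have := aux_kernel hf hf' hMf hCf hK'i hK'i1 hK'i2 hK'int hK'mom1 hM2.symm hhk x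
    calc |(1 / h k ^ 2) * (∫ t, f t * K' ((x - t) / h k)) - f' x|
        ≤ Mf * M2 * h k := this
      _ = Mf * M2 * (k : ℝ) ^ (-α) := by rw [hband]
  -- summation
  have hsum : ∫ ω, C n x ω ∂ℙ = ∑ k ∈ Finset.Icc 1 n, ∫ ω, c k x ω ∂ℙ := by
    have e : (fun ω => C n x ω) = fun ω => ∑ k ∈ Finset.Icc 1 n, c k x ω :=
      funext fun ω => hC n x ω
    rw [e]
    exact integral_finset_sum _ fun k hk => (main k (Finset.mem_Icc.1 hk).1).1
  have hcard : (Finset.Icc 1 n).card = n := by rw [Nat.card_Icc]; omega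
  calc |(∫ ω, C n x ω ∂ℙ) - (n : ℝ) * f' x|
      = |∑ k ∈ Finset.Icc 1 n, ((∫ ω, c k x ω ∂ℙ) - f' x)| := by
        rw [hsum, Finset.sum_sub_distrib, Finset.sum_const, hcard, nsmul_eq_mul]
    _ ≤ ∑ k ∈ Finset.Icc 1 n, |(∫ ω, c k x ω ∂ℙ) - f' x| :=
        Finset.abs_sum_le_sum_abs _ _
    _ ≤ ∑ k ∈ Finset.Icc 1 n, Mf * M2 * (k : ℝ) ^ (-α) :=
        Finset.sum_le_sum fun k hk => (main k (Finset.mem_Icc.1 hk).1).2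
    _ = Mf * M2 * ∑ k ∈ Finset.Icc 1 n, (k : ℝ) ^ (-α) := by rw [Finset.mul_sum]
    _ ≤ Mf * M2 * ((1 + (1 - α)⁻¹) * (n : ℝ) ^ (1 - α)) :=
        mul_le_mul_of_nonneg_left (aux_sum_rpow_s15 hα0 hα1 n hn1) (mul_nonneg hMf0 hM20)
    _ = A * (n : ℝ) ^ (1 - α) := by rw [hA]; ring
    _ ≤ δ * (n : ℝ) ^ ((1 + 3 * α) / 2) := by
        have hrpow : (n : ℝ) ^ ((1 + 3 * α) / 2)
            = (n : ℝ) ^ ((5 * α - 1) / 2) * (n : ℝ) ^ (1 - α) := by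
          rw [← Real.rpow_add hnpos]; congr 1; ring
        rw [hrpow]
        have h2 : A ≤ δ * (n : ℝ) ^ ((5 * α - 1) / 2) := by
          calc A = δ * (A / δ) := by field_simp
            _ ≤ δ * (n : ℝ) ^ ((5 * α - 1) / 2) :=
                mul_le_mul_of_nonneg_left hge hδ.le
        calc A * (n : ℝ) ^ (1 - α)
            ≤ (δ * (n : ℝ) ^ ((5 * α - 1) / 2)) * (n : ℝ) ^ (1 - α) :=
              mul_le_mul_of_nonneg_right h2 (Real.rpow_nonneg hnpos.le _)
          _ = δ * ((n : ℝ) ^ ((5 * α - 1) / 2) * (n : ℝ) ^ (1 - α)) := by ring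
end
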